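/- arXiv:1702.00980 — 9 statements merged into one kernel-verified Lean document; each statement's English description precedes it below -/
import Mathlib

section
/- Tropical Sylvester–Franke identity over the max-plus semiring: for every n×n matrix A over ℝ_max and every k with 1 ≤ k ≤ n, the tropical permanent of the k-th compound matrix satisfies per(A^{∧k}) = per(A)^{⊙ C(n−1,k−1)}, i.e. per(A^{∧k}) equals the binomial coefficient C(n−1,k−1) times per(A) in the usual arithmetic of ℝ ∪ {−∞} (with c·(−∞) = −∞ for c ≥ 1). -/
open Matrix

noncomputable section

/-- The max-plus semiring `ℝ_max = ℝ ∪ {−∞}`: addition is `max` (the lattice `⊔`),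
multiplication is `+` with `⊥ = −∞` absorbing. -/
abbrev Rmax : Type := WithBot ℝ

/-- Tropical matrix product: `(A ⊙ B) i j = max_t (A i t + B t j)`. -/
def tropMul {l m p : Type*} [Fintype m] (A : Matrix l m Rmax) (B : Matrix m p Rmax) :
    Matrix l p Rmax :=
  Matrix.of fun i j => Finset.univ.sup fun t => A i t + B t j

/-- The tropical identity matrix: `0` on the diagonal, `−∞` elsewhere. -/
def tropId (m : Type*) [DecidableEq m] : Matrix m m Rmax :=
  Matrix.of fun i j => if i = j then (0 : Rmax) else ⊥

/-- Tropical permanent: maximum over permutations of the sum of the selected entries. -/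
def tropPer {m : Type*} [Fintype m] [DecidableEq m] (A : Matrix m m Rmax) : Rmax :=
  Finset.univ.sup fun σ : Equiv.Perm m => ∑ i, A i (σ i)

/-- Tropical trace: maximum of the diagonal entries. -/
def tropTrace {m : Type*} [Fintype m] (A : Matrix m m Rmax) : Rmax :=
  Finset.univ.sup fun i => A i i

/-- The type of `k`-element subsets of `{1,…,n}`. -/
abbrev KSub (n k : ℕ) : Type := {I : Finset (Fin n) // I.card = k}

/-- The `k`-th compound matrix: indexed by `k`-element subsets; the `(I,J)` entry is the
maximum over bijections `σ : I → J` of `∑_{i ∈ I} A i (σ i)`. -/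
def compound {n : ℕ} (k : ℕ) (A : Matrix (Fin n) (Fin n) Rmax) :
    Matrix (KSub n k) (KSub n k) Rmax :=
  Matrix.of fun I J =>
    Finset.univ.sup fun σ : {x // x ∈ I.1} ≃ {x // x ∈ J.1} =>
      ∑ i : {x // x ∈ I.1}, A i.1 (σ i).1

/-- Tropical adjoint: `adj(A) i j = per(A_{(j,i)})`, deleting row `j` and column `i`. -/
def tropAdj {n : ℕ} (A : Matrix (Fin (n+1)) (Fin (n+1)) Rmax) :
    Matrix (Fin (n+1)) (Fin (n+1)) Rmax :=
  Matrix.of fun i j => tropPer (A.submatrix j.succAbove i.succAbove)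

/-- Quasi-inverse `A^∇` of a nonsingular matrix: `(A^∇) i j = adj(A) i j − per(A)`. -/
def tropQInv {n : ℕ} (A : Matrix (Fin (n+1)) (Fin (n+1)) Rmax) :
    Matrix (Fin (n+1)) (Fin (n+1)) Rmax :=
  Matrix.of fun i j => tropAdj A i j + ((- (WithBot.unbotD 0 (tropPer A)) : ℝ) : Rmax)

/-- A matrix over `ℝ_max` is invertible iff it is a monomial (generalized permutation) matrix. -/
def IsMonomial {n : ℕ} (A : Matrix (Fin n) (Fin n) Rmax) : Prop :=
  ∃ (π : Equiv.Perm (Fin n)) (d : Fin n → ℝ),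
    ∀ i j, A i j = if j = π i then ((d i : ℝ) : Rmax) else ⊥

/-- `m`-fold tropical power of a square matrix (`A^{⊙0}` is the tropical identity). -/
def tropPow {m : Type*} [Fintype m] [DecidableEq m] (A : Matrix m m Rmax) : ℕ → Matrix m m Rmax
  | 0 => tropId m
  | k + 1 => tropMul (tropPow A k) A

open Finset

lemma count_mem {n k : ℕ} (hk1 : 1 ≤ k) (i : Fin n) :
    (Finset.univ.filter (fun I : KSub n k => i ∈ I.1)).card
      = Nat.choose (n - 1) (k - 1) := by
  classical
  have h : (Finset.univ.filter (fun I : KSub n k => i ∈ I.1)).card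
      = (((Finset.univ : Finset (Fin n)).erase i).powersetCard (k-1)).card := by
    refine Finset.card_bij' (fun I _ => I.1.erase i)
      (fun S hS => ⟨insert i S, by
        rw [Finset.mem_powersetCard] at hS
        rw [Finset.card_insert_of_notMem (fun h => (Finset.mem_erase.mp (hS.1 h)).1 rfl), hS.2]
        omega⟩) ?_ ?_ ?_ ?_
    · intro I hI
      rw [Finset.mem_filter] at hI
      rw [Finset.mem_powersetCard]
      exact ⟨Finset.erase_subset_erase i (Finset.subset_univ _),
        by rw [Finset.card_erase_of_mem hI.2, I.2]⟩
    · intro S hS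
      simp
    · intro I hI
      rw [Finset.mem_filter] at hI
      exact Subtype.ext (Finset.insert_erase hI.2)
    · intro S hS
      rw [Finset.mem_powersetCard] at hS
      exact Finset.erase_insert (fun h => (Finset.mem_erase.mp (hS.1 h)).1 rfl)
  rw [h, Finset.card_powersetCard, Finset.card_erase_of_mem (Finset.mem_univ i),
    Finset.card_univ, Fintype.card_fin]

lemma key {n : ℕ} (A : Matrix (Fin n) (Fin n) Rmax) (N : ℕ) :
    ∀ {ι : Type} [DecidableEq ι] (s : Finset ι) (r c : ι → Fin n),
    (∀ i, (s.filter (fun x => r x = i)).card = N) →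
    (∀ j, (s.filter (fun x => c x = j)).card = N) →
    ∑ x ∈ s, A (r x) (c x) ≤ N • tropPer A := by
  induction N with
  | zero =>
    intro ι _ s r c hr _
    have hs : s = ∅ := by
      apply Finset.eq_empty_of_forall_notMem
      intro x hx
      have : x ∈ s.filter (fun y => r y = r x) := Finset.mem_filter.mpr ⟨hx, rfl⟩
      have h0 := hr (r x)
      rw [Finset.card_eq_zero] at h0
      simp [h0] at this
    simp [hs]
  | succ N ih =>
    intro ι _ s r c hr hc
    classical
    -- Hall condition
    set t : Fin n → Finset (Fin n) := fun i => (s.filter (fun x => r x = i)).image c with ht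
    have hall : ∀ S : Finset (Fin n), S.card ≤ (S.biUnion t).card := by
      intro S
      have h1 : (s.filter (fun x => r x ∈ S)).card = S.card * (N+1) := by
        rw [Finset.card_eq_sum_card_fiberwise (s := s.filter (fun x => r x ∈ S)) (f := r) (t := S)
          (fun x hx => (Finset.mem_filter.mp hx).2)]
        rw [Finset.sum_congr rfl (fun i hi => ?_), Finset.sum_const, smul_eq_mul]
        rw [Finset.filter_filter]
        rw [← hr i]
        congr 1
        apply Finset.filter_congr
        intro x hx
        constructor
        · rintro ⟨_, h⟩; exact h
        · rintro h; exact ⟨h ▸ hi, h⟩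
      have h2 : (s.filter (fun x => c x ∈ S.biUnion t)).card = (S.biUnion t).card * (N+1) := by
        rw [Finset.card_eq_sum_card_fiberwise (s := s.filter (fun x => c x ∈ S.biUnion t)) (f := c) (t := S.biUnion t)
          (fun x hx => (Finset.mem_filter.mp hx).2)]
        rw [Finset.sum_congr rfl (fun j hj => ?_), Finset.sum_const, smul_eq_mul]
        rw [Finset.filter_filter]
        rw [← hc j]
        congr 1
        apply Finset.filter_congr
        intro x hx
        constructor
        · rintro ⟨_, h⟩; exact h
        · rintro h; exact ⟨h ▸ hj, h⟩
      have hsub : s.filter (fun x => r x ∈ S) ⊆ s.filter (fun x => c x ∈ S.biUnion t) := by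
        intro x hx
        rw [Finset.mem_filter] at hx ⊢
        refine ⟨hx.1, Finset.mem_biUnion.mpr ⟨r x, hx.2, ?_⟩⟩
        exact Finset.mem_image_of_mem c (Finset.mem_filter.mpr ⟨hx.1, rfl⟩)
      have := Finset.card_le_card hsub
      rw [h1, h2] at this
      exact Nat.le_of_mul_le_mul_right this (Nat.succ_pos N)
    obtain ⟨f, hfinj, hft⟩ := (Finset.all_card_le_biUnion_card_iff_exists_injective t).mp hall
    have hfe : ∀ i, ∃ x, x ∈ s ∧ r x = i ∧ c x = f i := by
      intro i
      obtain ⟨x, hx, hcx⟩ := Finset.mem_image.mp (hft i)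
      rw [Finset.mem_filter] at hx
      exact ⟨x, hx.1, hx.2, hcx⟩
    choose e he1 he2 he3 using hfe
    have heinj : Function.Injective e := fun a b hab => by
      rw [← he2 a, ← he2 b, hab]
    have hfsurj : Function.Surjective f := Finite.surjective_of_injective hfinj
    set s' : Finset ι := s \ Finset.univ.image e with hs'
    have hims : Finset.univ.image e ⊆ s := by
      intro x hx
      obtain ⟨i, _, rfl⟩ := Finset.mem_image.mp hx
      exact he1 i
    have hr' : ∀ i, (s'.filter (fun x => r x = i)).card = N := by
      intro i
      have : s'.filter (fun x => r x = i) = (s.filter (fun x => r x = i)).erase (e i) := by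
        ext x
        simp only [hs', Finset.mem_filter, Finset.mem_sdiff, Finset.mem_erase,
          Finset.mem_image, Finset.mem_univ, true_and]
        constructor
        · rintro ⟨⟨hxs, hne⟩, hrx⟩
          exact ⟨fun h => hne ⟨i, h.symm⟩, hxs, hrx⟩
        · rintro ⟨hne, hxs, hrx⟩
          refine ⟨⟨hxs, ?_⟩, hrx⟩
          rintro ⟨i', rfl⟩
          rw [he2 i'] at hrx
          exact hne (by rw [hrx])
      rw [this, Finset.card_erase_of_mem (Finset.mem_filter.mpr ⟨he1 i, he2 i⟩), hr i]
      omega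
    have hc' : ∀ j, (s'.filter (fun x => c x = j)).card = N := by
      intro j
      obtain ⟨i₀, rfl⟩ := hfsurj j
      have : s'.filter (fun x => c x = f i₀) = (s.filter (fun x => c x = f i₀)).erase (e i₀) := by
        ext x
        simp only [hs', Finset.mem_filter, Finset.mem_sdiff, Finset.mem_erase,
          Finset.mem_image, Finset.mem_univ, true_and]
        constructor
        · rintro ⟨⟨hxs, hne⟩, hcx⟩
          exact ⟨fun h => hne ⟨i₀, h.symm⟩, hxs, hcx⟩
        · rintro ⟨hne, hxs, hcx⟩
          refine ⟨⟨hxs, ?_⟩, hcx⟩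
          rintro ⟨i', rfl⟩
          have : f i' = f i₀ := by rw [← he3 i']; exact hcx
          exact hne (by rw [hfinj this])
      rw [this, Finset.card_erase_of_mem (Finset.mem_filter.mpr ⟨he1 i₀, he3 i₀⟩), hc (f i₀)]
      omega
    -- split the sum
    have hsplit : ∑ x ∈ s, A (r x) (c x)
        = ∑ x ∈ s', A (r x) (c x) + ∑ x ∈ Finset.univ.image e, A (r x) (c x) := by
      rw [hs', Finset.sum_sdiff hims]
    have him : ∑ x ∈ Finset.univ.image e, A (r x) (c x) = ∑ i, A i (f i) := by
      rw [Finset.sum_image (fun a _ b _ hab => heinj hab)]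
      exact Finset.sum_congr rfl (fun i _ => by rw [he2, he3])
    have hperm : ∑ i, A i (f i) ≤ tropPer A := by
      have := Finset.le_sup (f := fun σ : Equiv.Perm (Fin n) => ∑ i, A i (σ i))
        (Finset.mem_univ (Equiv.ofBijective f ⟨hfinj, hfsurj⟩))
      exact this
    calc ∑ x ∈ s, A (r x) (c x)
        = ∑ x ∈ s', A (r x) (c x) + ∑ i, A i (f i) := by rw [hsplit, him]
      _ ≤ N • tropPer A + tropPer A := add_le_add (ih s' r c hr' hc') hperm
      _ = (N+1) • tropPer A := (succ_nsmul _ _).symm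

/-- Permutation of `k`-subsets induced by a permutation of `Fin n`. -/
def permKSub {n k : ℕ} (τ : Equiv.Perm (Fin n)) : Equiv.Perm (KSub n k) where
  toFun I := ⟨I.1.image τ, by rw [Finset.card_image_of_injective _ τ.injective, I.2]⟩
  invFun I := ⟨I.1.image τ.symm, by rw [Finset.card_image_of_injective _ τ.symm.injective, I.2]⟩
  left_inv I := Subtype.ext (by
    simp [Finset.image_image, Function.comp_def])
  right_inv I := Subtype.ext (by
    simp [Finset.image_image, Function.comp_def])

/-- Restriction of a permutation to an equivalence between a subset and its image. -/
def restEquiv {n : ℕ} (τ : Equiv.Perm (Fin n)) (I : Finset (Fin n)) :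
    {x // x ∈ I} ≃ {x // x ∈ I.image τ} where
  toFun x := ⟨τ x, Finset.mem_image_of_mem τ x.2⟩
  invFun y := ⟨τ.symm y, by
    obtain ⟨a, ha, hae⟩ := Finset.mem_image.mp y.2
    rw [← hae]; simpa⟩
  left_inv x := by simp
  right_inv y := by simp

/-- Tropical Sylvester–Franke identity over `ℝ_max`:
`per(A^{∧k}) = C(n−1,k−1) ⊙ per(A)`. -/
theorem tropical_sylvester_franke {n k : ℕ} (hk1 : 1 ≤ k) (hk2 : k ≤ n)
    (A : Matrix (Fin n) (Fin n) Rmax) :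
    tropPer (compound k A) = (Nat.choose (n - 1) (k - 1)) • tropPer A := by
  classical
  set C := Nat.choose (n - 1) (k - 1) with hC
  apply le_antisymm
  · -- upper bound
    apply Finset.sup_le
    intro P _
    -- choose a maximizing bijection for each entry
    have hne : ∀ I : KSub n k, Nonempty ({x // x ∈ I.1} ≃ {x // x ∈ (P I).1}) := by
      intro I
      apply Fintype.card_eq.mp
      rw [Fintype.card_coe, Fintype.card_coe, I.2, (P I).2]
    have hσ : ∀ I : KSub n k, ∃ σ : {x // x ∈ I.1} ≃ {x // x ∈ (P I).1},
        compound k A I (P I) = ∑ x : {x // x ∈ I.1}, A x.1 ((σ x) : Fin n) := by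
      intro I
      obtain ⟨σ, _, hσ⟩ := Finset.exists_mem_eq_sup (Finset.univ) (by
        have := hne I; exact Finset.univ_nonempty)
        (fun σ : {x // x ∈ I.1} ≃ {x // x ∈ (P I).1} => ∑ x : {x // x ∈ I.1}, A x.1 ((σ x) : Fin n))
      exact ⟨σ, hσ⟩
    choose σ hσ using hσ
    -- set up the multigraph
    set r : ((I : KSub n k) × {x // x ∈ I.1}) → Fin n := fun p => p.2.1 with hrdef
    set c : ((I : KSub n k) × {x // x ∈ I.1}) → Fin n := fun p => (σ p.1 p.2).1 with hcdef
    have hsum : ∑ I : KSub n k, compound k A I (P I)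
        = ∑ p : (I : KSub n k) × {x // x ∈ I.1}, A (r p) (c p) := by
      rw [← Finset.univ_sigma_univ, Finset.sum_sigma]
      exact Finset.sum_congr rfl (fun I _ => by rw [hσ I])
    have hinner : ∀ (I : KSub n k) (j : Fin n) (J : KSub n k)
        (e : {x // x ∈ I.1} ≃ {x // x ∈ J.1}),
        (∑ x : {x // x ∈ I.1}, if (e x : Fin n) = j then 1 else 0)
          = if j ∈ J.1 then 1 else 0 := by
      intro I j J e
      rw [Equiv.sum_comp e (fun y : {x // x ∈ J.1} => if (y : Fin n) = j then (1:ℕ) else 0)]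
      rw [Finset.sum_coe_sort J.1 (fun y => if y = j then (1:ℕ) else 0)]
      exact Finset.sum_ite_eq' J.1 j (fun _ => 1)
    have hr : ∀ i, ((Finset.univ.filter (fun p : (I : KSub n k) × {x // x ∈ I.1} => r p = i)).card) = C := by
      intro i
      rw [Finset.card_filter]
      rw [← Finset.univ_sigma_univ, Finset.sum_sigma]
      have : ∀ I : KSub n k, (∑ x : {x // x ∈ I.1}, if (x : Fin n) = i then 1 else 0)
          = if i ∈ I.1 then 1 else 0 := by
        intro I
        rw [Finset.sum_coe_sort I.1 (fun y => if y = i then (1:ℕ) else 0)]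
        exact Finset.sum_ite_eq' I.1 i (fun _ => 1)
      rw [Finset.sum_congr rfl (fun I _ => this I)]
      rw [← Finset.card_filter, count_mem hk1]
    have hc : ∀ j, ((Finset.univ.filter (fun p : (I : KSub n k) × {x // x ∈ I.1} => c p = j)).card) = C := by
      intro j
      rw [Finset.card_filter]
      rw [← Finset.univ_sigma_univ, Finset.sum_sigma]
      rw [Finset.sum_congr rfl (fun I _ => hinner I j (P I) (σ I))]
      rw [Equiv.sum_comp P (fun J : KSub n k => if j ∈ J.1 then (1:ℕ) else 0)]
      rw [← Finset.card_filter, count_mem hk1]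
    calc ∑ I : KSub n k, compound k A I (P I)
        = ∑ p : (I : KSub n k) × {x // x ∈ I.1}, A (r p) (c p) := hsum
      _ ≤ C • tropPer A := key A C Finset.univ r c hr hc
  · -- lower bound
    obtain ⟨τ, _, hτ⟩ := Finset.exists_mem_eq_sup (Finset.univ)
      Finset.univ_nonempty (fun σ : Equiv.Perm (Fin n) => ∑ i, A i (σ i))
    rw [show tropPer A = ∑ i, A i (τ i) from hτ]
    have step1 : (C : ℕ) • ∑ i, A i (τ i) = ∑ i, C • A i (τ i) := Finset.smul_sum
    have step2 : ∀ i : Fin n, C • A i (τ i)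
        = ∑ I ∈ Finset.univ.filter (fun I : KSub n k => i ∈ I.1), A i (τ i) := by
      intro i
      rw [Finset.sum_const, count_mem hk1]
    have step3 : ∑ i : Fin n, ∑ I ∈ Finset.univ.filter (fun I : KSub n k => i ∈ I.1), A i (τ i)
        = ∑ I : KSub n k, ∑ i ∈ I.1, A i (τ i) := by
      simp_rw [Finset.sum_filter]
      rw [Finset.sum_comm]
      apply Finset.sum_congr rfl
      intro I _
      rw [← Finset.sum_filter]
      apply Finset.sum_congr _ (fun _ _ => rfl)
      simp [Finset.filter_mem_eq_inter]
    have step4 : ∀ I : KSub n k, ∑ i ∈ I.1, A i (τ i) ≤ compound k A I (permKSub τ I) := by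
      intro I
      have hle := Finset.le_sup (f := fun σ : {x // x ∈ I.1} ≃ {x // x ∈ (permKSub τ I).1} =>
        ∑ x : {x // x ∈ I.1}, A x.1 ((σ x) : Fin n))
        (Finset.mem_univ (restEquiv τ I.1))
      have heq : ∑ x : {x // x ∈ I.1}, A x.1 ((restEquiv τ I.1 x : Fin n))
          = ∑ i ∈ I.1, A i (τ i) := by
        rw [← Finset.sum_coe_sort I.1 (fun i => A i (τ i))]
        rfl
      rw [← heq]
      exact hle
    calc C • ∑ i, A i (τ i) = ∑ I : KSub n k, ∑ i ∈ I.1, A i (τ i) := by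
          rw [step1, Finset.sum_congr rfl (fun i _ => step2 i), step3]
      _ ≤ ∑ I : KSub n k, compound k A I (permKSub τ I) :=
          Finset.sum_le_sum (fun I _ => step4 I)
      _ ≤ tropPer (compound k A) :=
          Finset.le_sup (f := fun P : Equiv.Perm (KSub n k) =>
            ∑ I : KSub n k, compound k A I (P I)) (Finset.mem_univ (permKSub τ))
end
end

section
/- Over the max-plus semiring, for all n×n matrices A, B over ℝ_max one has per(A⊙B) ≥ per(A) + per(B) (tropical product of permanents, with −∞ absorbing), and equality per(A⊙B) = per(A) + per(B) holds whenever A or B is invertible (i.e. a monomial matrix). -/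
open Matrix

noncomputable section

lemma tropPer_of_monomial {n : ℕ} (A : Matrix (Fin n) (Fin n) Rmax)
    (π : Equiv.Perm (Fin n)) (d : Fin n → ℝ)
    (h : ∀ i j, A i j = if j = π i then ((d i : ℝ) : Rmax) else ⊥) :
    tropPer A = ∑ i, ((d i : ℝ) : Rmax) := by
  apply le_antisymm
  · apply Finset.sup_le
    intro σ _
    apply Finset.sum_le_sum
    intro i _
    rw [h]
    split
    · exact le_rfl
    · exact bot_le
  · unfold tropPer
    have h2 : (∑ i, ((d i : ℝ) : Rmax)) = ∑ i, A i (π i) := by simp [h]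
    rw [h2]
    exact Finset.le_sup (f := fun σ : Equiv.Perm (Fin n) => ∑ i, A i (σ i))
      (Finset.mem_univ π)

lemma tropPer_le_main {n : ℕ} (A B : Matrix (Fin n) (Fin n) Rmax) :
    tropPer A + tropPer B ≤ tropPer (tropMul A B) := by
  obtain ⟨σ, -, hσ⟩ := Finset.exists_mem_eq_sup Finset.univ Finset.univ_nonempty
    (fun σ : Equiv.Perm (Fin n) => ∑ i, A i (σ i))
  obtain ⟨τ, -, hτ⟩ := Finset.exists_mem_eq_sup Finset.univ Finset.univ_nonempty
    (fun τ : Equiv.Perm (Fin n) => ∑ i, B i (τ i))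
  show Finset.univ.sup _ + Finset.univ.sup _ ≤ _
  rw [hσ, hτ]
  have h1 : (∑ i, B i (τ i)) = ∑ i, B (σ i) (τ (σ i)) :=
    (Equiv.sum_comp σ (fun j => B j (τ j))).symm
  rw [h1, ← Finset.sum_add_distrib]
  calc (∑ i, (A i (σ i) + B (σ i) (τ (σ i))))
      ≤ ∑ i, tropMul A B i ((σ.trans τ) i) := by
        apply Finset.sum_le_sum
        intro i _
        exact Finset.le_sup (f := fun t => A i t + B t (τ (σ i))) (Finset.mem_univ (σ i))
    _ ≤ tropPer (tropMul A B) :=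
        Finset.le_sup (f := fun ρ : Equiv.Perm (Fin n) => ∑ i, tropMul A B i (ρ i))
          (Finset.mem_univ (σ.trans τ))

/-- `per(A⊙B) ≥ per(A) + per(B)`, with equality when `A` or `B`
is invertible (monomial). -/
theorem tropPer_mul_ge_add {n : ℕ} (A B : Matrix (Fin n) (Fin n) Rmax) :
    tropPer A + tropPer B ≤ tropPer (tropMul A B) ∧
      ((IsMonomial A ∨ IsMonomial B) →
        tropPer (tropMul A B) = tropPer A + tropPer B) := by
  refine ⟨tropPer_le_main A B, ?_⟩
  rintro (⟨π, d, h⟩ | ⟨π, d, h⟩) <;>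
    refine le_antisymm (Finset.sup_le ?_) (tropPer_le_main A B)
  · -- A monomial
    intro σ _
    have hAB : ∀ i j, tropMul A B i j ≤ ((d i : ℝ) : Rmax) + B (π i) j := by
      intro i j
      simp only [tropMul, Matrix.of_apply]
      apply Finset.sup_le
      intro t _
      rw [h]
      split
      · subst ‹t = π i›; exact le_rfl
      · simp
    calc (∑ i, tropMul A B i (σ i))
        ≤ ∑ i, (((d i : ℝ) : Rmax) + B (π i) (σ i)) :=
          Finset.sum_le_sum (fun i _ => hAB i (σ i))
      _ = (∑ i, ((d i : ℝ) : Rmax)) + ∑ i, B (π i) (σ i) := Finset.sum_add_distrib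
      _ ≤ tropPer A + tropPer B := by
          apply add_le_add
          · rw [tropPer_of_monomial A π d h]
          · have h2 : (∑ i, B (π i) (σ i)) = ∑ j, B j ((π.symm.trans σ) j) := by
              rw [← Equiv.sum_comp π (fun j => B j ((π.symm.trans σ) j))]
              simp [Equiv.trans]
            rw [h2]
            exact Finset.le_sup (f := fun ρ : Equiv.Perm (Fin n) => ∑ j, B j (ρ j))
              (Finset.mem_univ (π.symm.trans σ))
  · -- B monomial
    intro σ _
    have hAB : ∀ i j, tropMul A B i j ≤ A i (π.symm j) + ((d (π.symm j) : ℝ) : Rmax) := by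
      intro i j
      simp only [tropMul, Matrix.of_apply]
      apply Finset.sup_le
      intro t _
      rw [h]
      split
      · rename_i hj
        subst hj
        simp
      · simp
    calc (∑ i, tropMul A B i (σ i))
        ≤ ∑ i, (A i (π.symm (σ i)) + ((d (π.symm (σ i)) : ℝ) : Rmax)) :=
          Finset.sum_le_sum (fun i _ => hAB i (σ i))
      _ = (∑ i, A i ((σ.trans π.symm) i)) + ∑ i, ((d ((σ.trans π.symm) i) : ℝ) : Rmax) :=
          Finset.sum_add_distrib
      _ ≤ tropPer A + tropPer B := by
          apply add_le_add
          · exact Finset.le_sup (f := fun ρ : Equiv.Perm (Fin n) => ∑ i, A i (ρ i))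
              (Finset.mem_univ (σ.trans π.symm))
          · rw [tropPer_of_monomial B π d h,
              Equiv.sum_comp (σ.trans π.symm) (fun j => ((d j : ℝ) : Rmax))]
end
end

section
/- Over the max-plus semiring, if A is an invertible (monomial) n×n matrix over ℝ_max, then for every n×n matrix B one has adj(A⊙B) = adj(B) ⊙ adj(A), and moreover the quasi-inverse of A equals its tropical inverse: A^∇ = A^{−1}. -/
open Matrix

noncomputable section

lemma sup_single {α : Type*} [Fintype α] (f : α → Rmax) (t₀ : α)
    (h : ∀ t, t ≠ t₀ → f t = ⊥) : Finset.univ.sup f = f t₀ := by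
  apply le_antisymm
  · refine Finset.sup_le fun t _ => ?_
    by_cases ht : t = t₀
    · subst ht; exact le_rfl
    · simp [h t ht]
  · exact Finset.le_sup (Finset.mem_univ t₀)

lemma sup_all_bot {α : Type*} [Fintype α] (f : α → Rmax)
    (h : ∀ t, f t = ⊥) : Finset.univ.sup f = ⊥ :=
  le_antisymm (Finset.sup_le fun t _ => (h t).le) bot_le

lemma sup_comp_equiv {α β : Type*} [Fintype α] [Fintype β] (e : α ≃ β) (f : β → Rmax) :
    Finset.univ.sup (fun a => f (e a)) = Finset.univ.sup f := by
  apply le_antisymm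
  · exact Finset.sup_le fun a _ => Finset.le_sup (Finset.mem_univ _)
  · refine Finset.sup_le fun b _ => ?_
    simpa using Finset.le_sup (f := fun a => f (e a)) (Finset.mem_univ (e.symm b))

lemma add_sup_const {α : Type*} [Fintype α] [Nonempty α] (c : ℝ) (f : α → Rmax) :
    Finset.univ.sup (fun a => (c : Rmax) + f a) = (c : Rmax) + Finset.univ.sup f := by
  obtain ⟨a₀, -, h⟩ := Finset.exists_mem_eq_sup (α := Rmax) Finset.univ Finset.univ_nonempty f
  apply le_antisymm
  · exact Finset.sup_le fun a _ => add_le_add_right (Finset.le_sup (Finset.mem_univ a)) _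
  · rw [h]; exact Finset.le_sup (f := fun a => (c : Rmax) + f a) (Finset.mem_univ a₀)

lemma sum_eq_bot' {α : Type*} [Fintype α] [DecidableEq α] (f : α → Rmax) (a : α) (h : f a = ⊥) :
    ∑ x, f x = ⊥ := by
  rw [← Finset.add_sum_erase _ f (Finset.mem_univ a), h, WithBot.bot_add]

lemma coe_sum' {α : Type*} (s : Finset α) (g : α → ℝ) :
    (∑ x ∈ s, ((g x : ℝ) : Rmax)) = ((∑ x ∈ s, g x : ℝ) : Rmax) := by
  induction s using Finset.cons_induction with
  | empty => simp
  | cons a s ha ih => rw [Finset.sum_cons, Finset.sum_cons, ih, ← WithBot.coe_add]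

lemma exists_perm_comp {n : ℕ} (π : Equiv.Perm (Fin (n+1))) (j : Fin (n+1)) :
    ∃ ρ : Equiv.Perm (Fin n), ∀ k, π (j.succAbove k) = (π j).succAbove (ρ k) := by
  have h : ∀ k : Fin n, ∃ m, (π j).succAbove m = π (j.succAbove k) := fun k =>
    Fin.exists_succAbove_eq (fun he => Fin.succAbove_ne j k (π.injective he))
  choose ρ hρ using h
  have hinj : Function.Injective ρ := by
    intro a b hab
    have h1 : π (j.succAbove a) = π (j.succAbove b) := by rw [← hρ a, ← hρ b, hab]
    exact Fin.succAbove_right_injective (π.injective h1)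
  exact ⟨Equiv.ofBijective ρ (Finite.injective_iff_bijective.mp hinj),
    fun k => (hρ k).symm⟩

section Monomial
variable {n : ℕ} (π : Equiv.Perm (Fin (n+1))) (d : Fin (n+1) → ℝ)
  (A : Matrix (Fin (n+1)) (Fin (n+1)) Rmax)
  (hAd : ∀ i j, A i j = if j = π i then ((d i : ℝ) : Rmax) else ⊥)

include hAd

lemma tropMul_monomial (B : Matrix (Fin (n+1)) (Fin (n+1)) Rmax) (i j : Fin (n+1)) :
    tropMul A B i j = (d i : Rmax) + B (π i) j := by
  show Finset.univ.sup (fun t => A i t + B t j) = _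
  rw [sup_single _ (π i) (fun t ht => by rw [hAd]; simp [ht]), hAd]
  simp

lemma tropAdj_tropMul_monomial (B : Matrix (Fin (n+1)) (Fin (n+1)) Rmax) (i j : Fin (n+1)) :
    tropAdj (tropMul A B) i j
      = ((∑ k, d (j.succAbove k) : ℝ) : Rmax) + tropAdj B i (π j) := by
  obtain ⟨ρ, hρ⟩ := exists_perm_comp π j
  show tropPer _ = _
  unfold tropPer
  have hentry : ∀ (k l : Fin n),
      (tropMul A B).submatrix j.succAbove i.succAbove k l
        = (d (j.succAbove k) : Rmax) + B ((π j).succAbove (ρ k)) (i.succAbove l) := by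
    intro k l
    rw [Matrix.submatrix_apply, tropMul_monomial π d A hAd, hρ]
  calc Finset.univ.sup (fun σ : Equiv.Perm (Fin n) =>
          ∑ k, (tropMul A B).submatrix j.succAbove i.succAbove k (σ k))
      = Finset.univ.sup (fun σ : Equiv.Perm (Fin n) =>
          ((∑ k, d (j.succAbove k) : ℝ) : Rmax)
            + ∑ k, B ((π j).succAbove (ρ k)) (i.succAbove (σ k))) := by
        refine congrArg _ (funext fun σ => ?_)
        simp only [hentry]
        rw [Finset.sum_add_distrib, coe_sum']
    _ = ((∑ k, d (j.succAbove k) : ℝ) : Rmax)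
          + Finset.univ.sup (fun σ : Equiv.Perm (Fin n) =>
              ∑ k, B ((π j).succAbove (ρ k)) (i.succAbove (σ k))) := add_sup_const _ _
    _ = ((∑ k, d (j.succAbove k) : ℝ) : Rmax) + tropAdj B i (π j) := by
        congr 1
        show _ = Finset.univ.sup (fun τ : Equiv.Perm (Fin n) =>
          ∑ k, B.submatrix (π j).succAbove i.succAbove k (τ k))
        rw [← sup_comp_equiv (Equiv.mulRight ρ⁻¹)
          (fun τ : Equiv.Perm (Fin n) =>
            ∑ k, B.submatrix (π j).succAbove i.succAbove k (τ k))]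
        refine congrArg _ (funext fun σ => ?_)
        refine Fintype.sum_equiv ρ _ _ fun k => ?_
        simp [Matrix.submatrix_apply, Equiv.Perm.mul_apply]

lemma tropAdj_monomial (i j : Fin (n+1)) :
    tropAdj A i j
      = if i = π j then ((∑ k, d (j.succAbove k) : ℝ) : Rmax) else ⊥ := by
  obtain ⟨ρ, hρ⟩ := exists_perm_comp π j
  show tropPer _ = _
  unfold tropPer
  have hentry : ∀ (k l : Fin n),
      A.submatrix j.succAbove i.succAbove k l
        = if i.succAbove l = (π j).succAbove (ρ k) then ((d (j.succAbove k) : ℝ) : Rmax)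
          else ⊥ := by
    intro k l
    rw [Matrix.submatrix_apply, hAd, hρ]
  by_cases hij : i = π j
  · subst hij
    rw [if_pos rfl]
    rw [sup_single _ ρ]
    · have : ∀ k : Fin n, A.submatrix j.succAbove (π j).succAbove k (ρ k)
          = ((d (j.succAbove k) : ℝ) : Rmax) := fun k => by rw [hentry, if_pos rfl]
      simp only [this]
      exact coe_sum' _ _
    · intro σ hσ
      obtain ⟨k, hk⟩ : ∃ k, σ k ≠ ρ k := by
        by_contra h
        push_neg at h
        exact hσ (Equiv.ext h)
      refine sum_eq_bot' _ k ?_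
      rw [hentry, if_neg (fun h => hk (Fin.succAbove_right_injective h))]
  · rw [if_neg hij]
    obtain ⟨k₀, hk₀⟩ : ∃ k₀, j.succAbove k₀ = π.symm i :=
      Fin.exists_succAbove_eq (fun he => hij (by rw [← he]; simp))
    refine sup_all_bot _ fun σ => ?_
    refine sum_eq_bot' _ k₀ ?_
    rw [hentry, ← hρ, hk₀, if_neg]
    simp [Fin.succAbove_ne]

lemma tropPer_monomial : tropPer A = ((∑ i, d i : ℝ) : Rmax) := by
  unfold tropPer
  rw [sup_single _ π]
  · have : ∀ i, A i (π i) = ((d i : ℝ) : Rmax) := fun i => by rw [hAd, if_pos rfl]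
    simp only [this]
    exact coe_sum' _ _
  · intro σ hσ
    obtain ⟨k, hk⟩ : ∃ k, σ k ≠ π k := by
      by_contra h
      push_neg at h
      exact hσ (Equiv.ext h)
    exact sum_eq_bot' _ k (by rw [hAd, if_neg hk])

lemma inv_monomial (Ainv : Matrix (Fin (n+1)) (Fin (n+1)) Rmax)
    (h1 : tropMul A Ainv = tropId (Fin (n+1))) (i j : Fin (n+1)) :
    Ainv (π i) j = if j = i then ((-(d i) : ℝ) : Rmax) else ⊥ := by
  have h := congrFun (congrFun h1 i) j
  rw [tropMul_monomial π d A hAd] at h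
  by_cases hij : i = j
  · subst hij
    rw [if_pos rfl]
    have h0 : (d i : Rmax) + Ainv (π i) i = 0 := by
      rw [h]; simp [tropId]
    by_cases hx : Ainv (π i) i = ⊥
    · rw [hx, WithBot.add_bot] at h0; exact absurd h0 (by simp)
    · obtain ⟨r, hr⟩ := WithBot.ne_bot_iff_exists.mp hx
      rw [← hr, ← WithBot.coe_add] at h0
      have hd : d i + r = 0 := by exact_mod_cast h0
      have : r = -(d i) := by linarith
      rw [← hr, this]
  · rw [if_neg (fun hji => hij hji.symm)]
    have h0 : (d i : Rmax) + Ainv (π i) j = ⊥ := by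
      rw [h]; simp [tropId, hij]
    by_cases hx : Ainv (π i) j = ⊥
    · exact hx
    · obtain ⟨r, hr⟩ := WithBot.ne_bot_iff_exists.mp hx
      rw [← hr, ← WithBot.coe_add] at h0
      exact absurd h0 (by simp)

end Monomial


/-- for invertible (monomial) `A`, `adj(A⊙B) = adj(B) ⊙ adj(A)` for every `B`,
and the quasi-inverse of `A` equals its tropical inverse. -/
theorem tropAdj_mul_of_monomial {n : ℕ} (A B Ainv : Matrix (Fin (n+1)) (Fin (n+1)) Rmax)
    (hA : IsMonomial A)
    (h1 : tropMul A Ainv = tropId (Fin (n+1)))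
    (h2 : tropMul Ainv A = tropId (Fin (n+1))) :
    tropAdj (tropMul A B) = tropMul (tropAdj B) (tropAdj A) ∧ tropQInv A = Ainv := by
  obtain ⟨π, d, hAd⟩ := hA
  constructor
  · ext i j
    rw [tropAdj_tropMul_monomial π d A hAd B i j]
    show _ = Finset.univ.sup fun t => tropAdj B i t + tropAdj A t j
    rw [sup_single _ (π j) (fun t ht => by
      rw [tropAdj_monomial π d A hAd, if_neg ht, WithBot.add_bot])]
    rw [tropAdj_monomial π d A hAd, if_pos rfl, add_comm]
  · ext i j
    show tropAdj A i j + ((- (WithBot.unbotD 0 (tropPer A)) : ℝ) : Rmax) = Ainv i j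
    rw [tropPer_monomial π d A hAd, WithBot.unbotD_coe, tropAdj_monomial π d A hAd]
    have hAinv := inv_monomial π d A hAd Ainv h1 (π.symm i) j
    rw [Equiv.apply_symm_apply] at hAinv
    rw [hAinv]
    by_cases hij : i = π j
    · have hj : j = π.symm i := by rw [hij]; simp
      rw [if_pos hij, if_pos hj, ← WithBot.coe_add, ← hj]
      congr 1
      have := Fin.sum_univ_succAbove d j
      linarith
    · rw [if_neg hij, if_neg (fun h : j = π.symm i => hij (by rw [h]; simp)), WithBot.bot_add]

end
end

section
/- Tropical Jacobi inequality over the max-plus semiring: if A is a nonsingular n×n matrix over ℝ_max (per(A) > −∞), then for every k with 1 ≤ k ≤ n−1 and all k-element subsets I, J of {1,…,n}, one has per(A) + (A^∇)^{∧(n−k)}_{J^c, I^c} ≥ A^{∧k}_{I,J}, where I^c, J^c denote complements in {1,…,n}. -/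
open Matrix

noncomputable section

lemma rmax_coe_nsmul (m : ℕ) (x : ℝ) : m • ((x : ℝ) : Rmax) = ((m • x : ℝ) : Rmax) := by
  induction m with
  | zero => simp
  | succ m ih => rw [succ_nsmul, succ_nsmul, ih, ← WithBot.coe_add]

lemma mapemb {n : ℕ} (r : Fin (n+1)) :
    (Finset.univ : Finset (Fin n)).map r.succAboveEmb = Finset.univ.erase r := by
  ext x
  simp only [Finset.mem_map, Finset.mem_univ, true_and, Finset.mem_erase, Fin.succAboveEmb_apply]
  constructor
  · rintro ⟨a, rfl⟩; exact ⟨Fin.succAbove_ne r a, trivial⟩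
  · rintro ⟨h, -⟩; exact Fin.exists_succAbove_eq h

lemma beta_le {n : ℕ} (A : Matrix (Fin (n+1)) (Fin (n+1)) Rmax) (r c : Fin (n+1))
    (β : Fin (n+1) → Fin (n+1))
    (hinj : ∀ x, x ≠ r → ∀ y, y ≠ r → β x = β y → x = y)
    (hne : ∀ x, x ≠ r → β x ≠ c) :
    ∑ i ∈ Finset.univ.erase r, A i (β i) ≤ tropPer (A.submatrix r.succAbove c.succAbove) := by
  have hne' : ∀ i : Fin n, β (r.succAbove i) ≠ c := fun i => hne _ (Fin.succAbove_ne r i)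
  choose δ hδ using fun i : Fin n => Fin.exists_succAbove_eq (hne' i)
  have hδinj : Function.Injective δ := by
    intro a b hab
    have h1 : β (r.succAbove a) = β (r.succAbove b) := by rw [← hδ a, ← hδ b, hab]
    exact Fin.succAbove_right_injective
      (hinj _ (Fin.succAbove_ne r a) _ (Fin.succAbove_ne r b) h1)
  let e : Equiv.Perm (Fin n) := Equiv.ofBijective δ (Finite.injective_iff_bijective.mp hδinj)
  have hle : (∑ i, (A.submatrix r.succAbove c.succAbove) i (e i)) ≤
      tropPer (A.submatrix r.succAbove c.succAbove) :=
    Finset.le_sup (f := fun σ : Equiv.Perm (Fin n) =>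
      ∑ i, (A.submatrix r.succAbove c.succAbove) i (σ i)) (Finset.mem_univ e)
  refine le_trans (le_of_eq ?_) hle
  rw [← mapemb r, Finset.sum_map]
  refine Finset.sum_congr rfl fun i _ => ?_
  simp only [Matrix.submatrix_apply, Fin.succAboveEmb_apply]
  rw [show (e i : Fin n) = δ i from rfl, hδ i]

def pathSeq {n : ℕ} (π : Equiv.Perm (Fin (n+1))) (f : Fin (n+1) → Fin (n+1))
    (c : Fin (n+1)) : ℕ → Fin (n+1)
  | 0 => π.symm c
  | s+1 => π.symm (f (pathSeq π f c s))

lemma key_s7 {n : ℕ} (A : Matrix (Fin (n+1)) (Fin (n+1)) Rmax) (π : Equiv.Perm (Fin (n+1))) :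
    ∀ m : ℕ, ∀ I : Finset (Fin (n+1)), ∀ f : Fin (n+1) → Fin (n+1),
    (∀ x ∈ I, ∀ y ∈ I, f x = f y → x = y) → Iᶜ.card = m + 1 →
    ∃ τ : Fin (n+1) → Fin (n+1),
      (∀ j ∈ (I.image f)ᶜ, τ j ∈ Iᶜ) ∧
      (∀ x ∈ (I.image f)ᶜ, ∀ y ∈ (I.image f)ᶜ, τ x = τ y → x = y) ∧
      (∑ i ∈ I, A i (f i)) + m • (∑ i, A i (π i)) ≤
        ∑ j ∈ (I.image f)ᶜ, tropPer (A.submatrix (τ j).succAbove j.succAbove) := by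
  intro m
  induction m with
  | zero =>
    intro I f hf hcard
    obtain ⟨r, hr⟩ := Finset.card_eq_one.mp hcard
    have hIr : I = Finset.univ.erase r := by
      rw [← compl_compl I, hr, Finset.compl_singleton]
    have hJcard : ((I.image f)ᶜ).card = 1 := by
      rw [Finset.card_compl,
        Finset.card_image_of_injOn (fun x hx y hy h => hf x hx y hy h),
        ← Finset.card_compl, hcard]
    obtain ⟨c, hc⟩ := Finset.card_eq_one.mp hJcard
    have hcJ : c ∉ I.image f := by
      have : c ∈ (I.image f)ᶜ := by rw [hc]; exact Finset.mem_singleton_self c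
      exact Finset.mem_compl.mp this
    refine ⟨fun _ => r, ?_, ?_, ?_⟩
    · intro j _; rw [hr]; exact Finset.mem_singleton_self r
    · intro x hx y hy _
      rw [hc, Finset.mem_singleton] at hx hy; rw [hx, hy]
    · rw [hc, Finset.sum_singleton, zero_nsmul, add_zero, hIr]
      refine beta_le A r c f ?_ ?_
      · intro x hx y hy h
        have hxI : x ∈ I := by rw [hIr]; exact Finset.mem_erase.mpr ⟨hx, Finset.mem_univ x⟩
        have hyI : y ∈ I := by rw [hIr]; exact Finset.mem_erase.mpr ⟨hy, Finset.mem_univ y⟩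
        exact hf x hxI y hyI h
      · intro x hx h
        have hxI : x ∈ I := by rw [hIr]; exact Finset.mem_erase.mpr ⟨hx, Finset.mem_univ x⟩
        exact hcJ (h ▸ Finset.mem_image_of_mem f hxI)
  | succ m IH =>
    intro I f hf hcard
    have hJcard : ((I.image f)ᶜ).card = m + 2 := by
      rw [Finset.card_compl,
        Finset.card_image_of_injOn (fun x hx y hy h => hf x hx y hy h),
        ← Finset.card_compl, hcard]
    have hcne : ((I.image f)ᶜ).Nonempty := by
      rw [← Finset.card_pos, hJcard]; omega
    obtain ⟨c, hc⟩ := hcne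
    have hcJ : c ∉ I.image f := Finset.mem_compl.mp hc
    set r : ℕ → Fin (n+1) := pathSeq π f c with hrdef
    have hr0 : r 0 = π.symm c := rfl
    have hrs : ∀ s, r (s+1) = π.symm (f (r s)) := fun s => rfl
    -- termination
    have hterm : ∃ s, r s ∉ I := by
      by_contra hcon
      push_neg at hcon
      have hinj : Function.Injective r := by
        intro a
        induction a with
        | zero =>
          intro b hab
          cases b with
          | zero => rfl
          | succ b =>
            exfalso
            rw [hr0, hrs] at hab
            have : c = f (r b) := π.symm.injective hab
            exact hcJ (this ▸ Finset.mem_image_of_mem f (hcon b))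
        | succ a ih =>
          intro b hab
          cases b with
          | zero =>
            exfalso
            rw [hr0, hrs] at hab
            have : f (r a) = c := π.symm.injective hab
            exact hcJ (this ▸ Finset.mem_image_of_mem f (hcon a))
          | succ b =>
            rw [hrs, hrs] at hab
            have h1 : f (r a) = f (r b) := π.symm.injective hab
            exact congrArg Nat.succ (ih (hf _ (hcon a) _ (hcon b) h1))
      obtain ⟨a, b, hab, heq⟩ := Finite.exists_ne_map_eq_of_infinite r
      exact hab (hinj heq)
    set t : ℕ := Nat.find hterm with htdef
    have ht : r t ∉ I := Nat.find_spec hterm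
    have hlt : ∀ s, s < t → r s ∈ I := fun s hs => not_not.mp (Nat.find_min hterm hs)
    have hdist : ∀ a b, a < b → b ≤ t → r a ≠ r b := by
      intro a
      induction a with
      | zero =>
        intro b hab hbt h
        obtain ⟨b, rfl⟩ : ∃ b', b = b' + 1 := ⟨b - 1, by omega⟩
        rw [hr0, hrs] at h
        have : c = f (r b) := π.symm.injective h
        exact hcJ (this ▸ Finset.mem_image_of_mem f (hlt b (by omega)))
      | succ a ih =>
        intro b hab hbt h
        obtain ⟨b, rfl⟩ : ∃ b', b = b' + 1 := ⟨b - 1, by omega⟩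
        rw [hrs, hrs] at h
        have h1 : f (r a) = f (r b) := π.symm.injective h
        exact ih b (by omega) (by omega) (hf _ (hlt a (by omega)) _ (hlt b (by omega)) h1)
    set T : Finset (Fin (n+1)) := (Finset.range (t+1)).image r with hTdef
    have hmemT : ∀ x, x ∈ T ↔ ∃ s, s ≤ t ∧ r s = x := by
      intro x
      simp only [hTdef, Finset.mem_image, Finset.mem_range, Nat.lt_succ_iff]
    have hrtT : r t ∈ T := (hmemT _).mpr ⟨t, le_refl t, rfl⟩
    have hr0T : r 0 ∈ T := (hmemT _).mpr ⟨0, Nat.zero_le t, rfl⟩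
    have hTlt : ∀ x, x ∈ T → x ≠ r t → ∃ s, s < t ∧ r s = x := by
      intro x hx hxne
      obtain ⟨s, hs, rfl⟩ := (hmemT x).mp hx
      rcases Nat.lt_or_ge s t with h | h
      · exact ⟨s, h, rfl⟩
      · exact absurd (by rw [le_antisymm hs h] : r s = r t) hxne
    have hTI : ∀ x, x ∈ T → x ≠ r t → x ∈ I := by
      intro x hx hxne
      obtain ⟨s, hs, rfl⟩ := hTlt x hx hxne
      exact hlt s hs
    have hπ0 : π (r 0) = c := π.apply_symm_apply c
    have hπs : ∀ s, π (r (s+1)) = f (r s) := fun s => π.apply_symm_apply _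
    set I' : Finset (Fin (n+1)) := insert (r t) I with hI'def
    have hTI' : T ⊆ I' := by
      intro x hx
      by_cases hxe : x = r t
      · rw [hxe]; exact Finset.mem_insert_self _ _
      · exact Finset.mem_insert_of_mem (hTI x hx hxe)
    set f' : Fin (n+1) → Fin (n+1) := fun i => if i ∈ T then π i else f i with hf'def
    have hf'T : ∀ x ∈ T, f' x = π x := fun x hx => if_pos hx
    have hf'nT : ∀ x, x ∉ T → f' x = f x := fun x hx => if_neg hx
    have hI'c : I'ᶜ.card = m + 1 := by
      rw [hI'def, Finset.compl_insert, Finset.card_erase_of_mem (Finset.mem_compl.mpr ht),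
        hcard]
      omega
    -- injectivity of f' on I'
    have hf' : ∀ x ∈ I', ∀ y ∈ I', f' x = f' y → x = y := by
      have mixed : ∀ x ∈ I', ∀ y ∈ I', x ∈ T → y ∉ T → f' x = f' y → False := by
        intro x hx y hy hxT hyT hxy
        have hyI : y ∈ I := by
          rcases Finset.mem_insert.mp hy with h | h
          · exact absurd (h ▸ hrtT) hyT
          · exact h
        rw [hf'T x hxT, hf'nT y hyT] at hxy
        obtain ⟨s, hs, rfl⟩ := (hmemT x).mp hxT
        cases s with
        | zero =>
          rw [hπ0] at hxy
          exact hcJ (hxy ▸ Finset.mem_image_of_mem f hyI)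
        | succ s =>
          rw [hπs] at hxy
          have hsI : r s ∈ I := hlt s (by omega)
          have : r s = y := hf _ hsI _ hyI hxy
          exact hyT (this ▸ (hmemT _).mpr ⟨s, by omega, rfl⟩)
      intro x hx y hy hxy
      by_cases hxT : x ∈ T <;> by_cases hyT : y ∈ T
      · rw [hf'T x hxT, hf'T y hyT] at hxy; exact π.injective hxy
      · exact absurd (mixed x hx y hy hxT hyT hxy) not_false
      · exact absurd (mixed y hy x hx hyT hxT hxy.symm) not_false
      · have hxI : x ∈ I := by
          rcases Finset.mem_insert.mp hx with h | h
          · exact absurd (h ▸ hrtT) hxT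
          · exact h
        have hyI : y ∈ I := by
          rcases Finset.mem_insert.mp hy with h | h
          · exact absurd (h ▸ hrtT) hyT
          · exact h
        rw [hf'nT x hxT, hf'nT y hyT] at hxy
        exact hf x hxI y hyI hxy
    -- image of f'
    have hrtI : r t ∉ I := ht
    have himg : I'.image f' = insert c (I.image f) := by
      apply Finset.eq_of_subset_of_card_le
      · intro z hz
        obtain ⟨x, hx, rfl⟩ := Finset.mem_image.mp hz
        by_cases hxT : x ∈ T
        · rw [hf'T x hxT]
          obtain ⟨s, hs, rfl⟩ := (hmemT x).mp hxT
          cases s with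
          | zero => rw [hπ0]; exact Finset.mem_insert_self _ _
          | succ s =>
            rw [hπs]
            exact Finset.mem_insert_of_mem
              (Finset.mem_image_of_mem f (hlt s (by omega)))
        · rw [hf'nT x hxT]
          have hxI : x ∈ I := by
            rcases Finset.mem_insert.mp hx with h | h
            · exact absurd (h ▸ hrtT) hxT
            · exact h
          exact Finset.mem_insert_of_mem (Finset.mem_image_of_mem f hxI)
      · rw [Finset.card_insert_of_notMem hcJ,
          Finset.card_image_of_injOn (fun x hx y hy h => hf' x hx y hy h),
          Finset.card_image_of_injOn (fun x hx y hy h => hf x hx y hy h),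
          hI'def, Finset.card_insert_of_notMem hrtI]
    obtain ⟨τ', hτ'mem, hτ'inj, hsum'⟩ := IH I' f' hf' hI'c
    rw [himg, Finset.compl_insert] at hτ'mem hτ'inj hsum'
    have hI'compl : I'ᶜ = Iᶜ.erase (r t) := by rw [hI'def, Finset.compl_insert]
    rw [hI'compl] at hτ'mem
    -- beta function
    set β : Fin (n+1) → Fin (n+1) := fun i => if i ∈ T then f i else π i with hβdef
    have hβT : ∀ x ∈ T, β x = f x := fun x hx => if_pos hx
    have hβnT : ∀ x, x ∉ T → β x = π x := fun x hx => if_neg hx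
    have hβne : ∀ x, x ≠ r t → β x ≠ c := by
      intro x hx h
      by_cases hxT : x ∈ T
      · rw [hβT x hxT] at h
        exact hcJ (h ▸ Finset.mem_image_of_mem f (hTI x hxT hx))
      · rw [hβnT x hxT] at h
        have : x = r 0 := by rw [hr0, ← h, Equiv.symm_apply_apply]
        exact hxT (this ▸ hr0T)
    have hβinj : ∀ x, x ≠ r t → ∀ y, y ≠ r t → β x = β y → x = y := by
      have mixed : ∀ x, x ≠ r t → ∀ y, y ≠ r t → x ∈ T → y ∉ T → β x = β y → False := by
        intro x hx y hy hxT hyT hxy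
        rw [hβT x hxT, hβnT y hyT] at hxy
        obtain ⟨s, hs, rfl⟩ := hTlt x hxT hx
        have : y = r (s+1) := by rw [hrs, hxy, Equiv.symm_apply_apply]
        exact hyT (this ▸ (hmemT _).mpr ⟨s+1, by omega, rfl⟩)
      intro x hx y hy hxy
      by_cases hxT : x ∈ T <;> by_cases hyT : y ∈ T
      · rw [hβT x hxT, hβT y hyT] at hxy
        obtain ⟨s, hs, rfl⟩ := hTlt x hxT hx
        obtain ⟨s', hs', rfl⟩ := hTlt y hyT hy
        exact hf _ (hlt s hs) _ (hlt s' hs') hxy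
      · exact absurd (mixed x hx y hy hxT hyT hxy) not_false
      · exact absurd (mixed y hy x hx hyT hxT hxy.symm) not_false
      · rw [hβnT x hxT, hβnT y hyT] at hxy; exact π.injective hxy
    have hβle := beta_le A (r t) c β hβinj hβne
    -- tau
    set τ : Fin (n+1) → Fin (n+1) := fun j => if j = c then r t else τ' j with hτdef
    have hτc : τ c = r t := if_pos rfl
    have hτnc : ∀ j, j ≠ c → τ j = τ' j := fun j hj => if_neg hj
    refine ⟨τ, ?_, ?_, ?_⟩
    · intro j hj
      by_cases hjc : j = c
      · rw [hjc, hτc]; exact Finset.mem_compl.mpr ht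
      · rw [hτnc j hjc]
        exact Finset.mem_of_mem_erase
          (hτ'mem j (Finset.mem_erase.mpr ⟨hjc, hj⟩))
    · intro x hx y hy hxy
      by_cases hxc : x = c <;> by_cases hyc : y = c
      · rw [hxc, hyc]
      · exfalso
        rw [hxc, hτc, hτnc y hyc] at hxy
        have := hτ'mem y (Finset.mem_erase.mpr ⟨hyc, hy⟩)
        rw [← hxy] at this
        exact (Finset.mem_erase.mp this).1 rfl
      · exfalso
        rw [hyc, hτc, hτnc x hxc] at hxy
        have := hτ'mem x (Finset.mem_erase.mpr ⟨hxc, hx⟩)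
        rw [hxy] at this
        exact (Finset.mem_erase.mp this).1 rfl
      · rw [hτnc x hxc, hτnc y hyc] at hxy
        exact hτ'inj x (Finset.mem_erase.mpr ⟨hxc, hx⟩)
          y (Finset.mem_erase.mpr ⟨hyc, hy⟩) hxy
    · -- the sum inequality
      have hsplit1 : ∑ i ∈ I', A i (f' i) =
          ∑ i ∈ T, A i (π i) + ∑ i ∈ I \ T, A i (f i) := by
        have hunion : I' = T ∪ (I \ T) := by
          ext x
          constructor
          · intro hx
            by_cases hxT : x ∈ T
            · exact Finset.mem_union_left _ hxT
            · rcases Finset.mem_insert.mp hx with h | h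
              · exact absurd (h ▸ hrtT) hxT
              · exact Finset.mem_union_right _ (Finset.mem_sdiff.mpr ⟨h, hxT⟩)
          · intro hx
            rcases Finset.mem_union.mp hx with h | h
            · exact hTI' h
            · exact Finset.mem_insert_of_mem (Finset.mem_sdiff.mp h).1
        have hdisj : Disjoint T (I \ T) := Finset.disjoint_sdiff
        rw [hunion, Finset.sum_union hdisj]
        congr 1
        · exact Finset.sum_congr rfl fun x hx => by rw [hf'T x hx]
        · exact Finset.sum_congr rfl fun x hx => by
            rw [hf'nT x (Finset.mem_sdiff.mp hx).2]
      have hsplit2 : ∑ i ∈ Finset.univ.erase (r t), A i (β i) =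
          ∑ i ∈ T.erase (r t), A i (f i) + ∑ i ∈ Finset.univ \ T, A i (π i) := by
        have hunion : Finset.univ.erase (r t) = (T.erase (r t)) ∪ (Finset.univ \ T) := by
          ext x
          constructor
          · intro hx
            have hxne := (Finset.mem_erase.mp hx).1
            by_cases hxT : x ∈ T
            · exact Finset.mem_union_left _ (Finset.mem_erase.mpr ⟨hxne, hxT⟩)
            · exact Finset.mem_union_right _
                (Finset.mem_sdiff.mpr ⟨Finset.mem_univ x, hxT⟩)
          · intro hx
            rcases Finset.mem_union.mp hx with h | h
            · exact Finset.mem_erase.mpr ⟨(Finset.mem_erase.mp h).1, Finset.mem_univ x⟩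
            · refine Finset.mem_erase.mpr ⟨?_, Finset.mem_univ x⟩
              intro hcon
              exact (Finset.mem_sdiff.mp h).2 (hcon ▸ hrtT)
        have hdisj : Disjoint (T.erase (r t)) (Finset.univ \ T) := by
          refine Finset.disjoint_left.mpr ?_
          intro x hx hx'
          exact (Finset.mem_sdiff.mp hx').2 (Finset.mem_of_mem_erase hx)
        rw [hunion, Finset.sum_union hdisj]
        congr 1
        · exact Finset.sum_congr rfl fun x hx => by
            rw [hβT x (Finset.mem_of_mem_erase hx)]
        · exact Finset.sum_congr rfl fun x hx => by
            rw [hβnT x (Finset.mem_sdiff.mp hx).2]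
      have hsplit3 : ∑ i ∈ T, A i (π i) + ∑ i ∈ Finset.univ \ T, A i (π i) =
          ∑ i, A i (π i) := by
        rw [add_comm]
        exact Finset.sum_sdiff (Finset.subset_univ T)
      have hsplit4 : ∑ i ∈ I \ T, A i (f i) + ∑ i ∈ T.erase (r t), A i (f i) =
          ∑ i ∈ I, A i (f i) := by
        have hsub : T.erase (r t) ⊆ I := fun x hx =>
          hTI x (Finset.mem_of_mem_erase hx) (Finset.mem_erase.mp hx).1
        have heq : I \ (T.erase (r t)) = I \ T := by
          ext x
          simp only [Finset.mem_sdiff, Finset.mem_erase]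
          constructor
          · rintro ⟨hxI, hx⟩
            refine ⟨hxI, fun hxT => hx ⟨fun hcon => hrtI (hcon ▸ hxI), hxT⟩⟩
          · rintro ⟨hxI, hx⟩
            exact ⟨hxI, fun hcon => hx hcon.2⟩
        rw [← heq]
        exact Finset.sum_sdiff hsub
      have E1 : (∑ i ∈ Finset.univ.erase (r t), A i (β i)) + (∑ i ∈ I', A i (f' i)) =
          (∑ i ∈ I, A i (f i)) + (∑ i, A i (π i)) := by
        rw [hsplit1, hsplit2, ← hsplit3, ← hsplit4]
        abel
      have hcompl_insert : (I.image f)ᶜ = insert c ((I.image f)ᶜ.erase c) :=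
        (Finset.insert_erase hc).symm
      have hfinal : ∑ j ∈ (I.image f)ᶜ, tropPer (A.submatrix (τ j).succAbove j.succAbove) =
          tropPer (A.submatrix (r t).succAbove c.succAbove) +
            ∑ j ∈ (I.image f)ᶜ.erase c, tropPer (A.submatrix (τ' j).succAbove j.succAbove) := by
        conv_lhs => rw [hcompl_insert]
        rw [Finset.sum_insert (Finset.notMem_erase c _), hτc]
        congr 1
        exact Finset.sum_congr rfl fun j hj => by
          rw [hτnc j (Finset.mem_erase.mp hj).1]
      calc (∑ i ∈ I, A i (f i)) + (m + 1) • (∑ i, A i (π i))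
          = ((∑ i ∈ I, A i (f i)) + (∑ i, A i (π i))) + m • (∑ i, A i (π i)) := by
            rw [succ_nsmul]; abel
        _ = ((∑ i ∈ Finset.univ.erase (r t), A i (β i)) + (∑ i ∈ I', A i (f' i)))
              + m • (∑ i, A i (π i)) := by rw [E1]
        _ = (∑ i ∈ Finset.univ.erase (r t), A i (β i)) +
              ((∑ i ∈ I', A i (f' i)) + m • (∑ i, A i (π i))) := by rw [add_assoc]
        _ ≤ tropPer (A.submatrix (r t).succAbove c.succAbove) +
              ∑ j ∈ (I.image f)ᶜ.erase c,
                tropPer (A.submatrix (τ' j).succAbove j.succAbove) :=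
            add_le_add hβle hsum'
        _ = ∑ j ∈ (I.image f)ᶜ, tropPer (A.submatrix (τ j).succAbove j.succAbove) :=
            hfinal.symm

/-- Tropical Jacobi inequality: for `A` nonsingular,
`per(A) + (A^∇)^{∧(n−k)}_{Jᶜ,Iᶜ} ≥ A^{∧k}_{I,J}`. -/
theorem tropical_jacobi_ineq {n : ℕ} (A : Matrix (Fin (n+1)) (Fin (n+1)) Rmax)
    (hA : ⊥ < tropPer A)
    (k : ℕ) (hk1 : 1 ≤ k) (hk2 : k ≤ n)
    (I J : KSub (n+1) k) :
    compound k A I J ≤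
      tropPer A +
        compound (n + 1 - k) (tropQInv A)
          ⟨J.1ᶜ, by simp [Finset.card_compl, J.2]⟩
          ⟨I.1ᶜ, by simp [Finset.card_compl, I.2]⟩ := by
  classical
  obtain ⟨p, hp⟩ := WithBot.ne_bot_iff_exists.mp (ne_of_gt hA)
  have hup : WithBot.unbotD 0 (tropPer A) = p := by rw [← hp]; rfl
  obtain ⟨π, -, hπ⟩ := Finset.exists_mem_eq_sup Finset.univ Finset.univ_nonempty
      (fun σ : Equiv.Perm (Fin (n+1)) => ∑ i, A i (σ i))
  have hPcoe : (∑ i, A i (π i)) = (p : Rmax) := by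
    have h1 : tropPer A = ∑ i, A i (π i) := hπ
    rw [← h1, ← hp]
  simp only [compound, Matrix.of_apply]
  refine Finset.sup_le fun σ _ => ?_
  set f : Fin (n+1) → Fin (n+1) :=
    fun i => if h : i ∈ I.1 then ((σ ⟨i, h⟩ : {x // x ∈ J.1}) : Fin (n+1)) else i with hfdef
  have hfI : ∀ x (h : x ∈ I.1), f x = ((σ ⟨x, h⟩ : {x // x ∈ J.1}) : Fin (n+1)) :=
    fun x h => dif_pos h
  have hf : ∀ x ∈ I.1, ∀ y ∈ I.1, f x = f y → x = y := by
    intro x hx y hy hxy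
    rw [hfI x hx, hfI y hy] at hxy
    have := σ.injective (Subtype.ext hxy)
    exact congrArg Subtype.val this
  have himg : I.1.image f = J.1 := by
    apply Finset.eq_of_subset_of_card_le
    · intro z hz
      obtain ⟨y, hy, rfl⟩ := Finset.mem_image.mp hz
      rw [hfI y hy]; exact (σ ⟨y, hy⟩).2
    · rw [Finset.card_image_of_injOn (fun x hx y hy h => hf x hx y hy h), I.2, J.2]
  have hcardI : I.1ᶜ.card = (n - k) + 1 := by
    rw [Finset.card_compl, I.2, Fintype.card_fin]; omega
  obtain ⟨τ, hτmem, hτinj, hsum⟩ := key_s7 A π (n - k) I.1 f hf hcardI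
  rw [himg] at hτmem hτinj hsum
  rw [hPcoe, rmax_coe_nsmul] at hsum
  have hσsum : (∑ i : {x // x ∈ I.1}, A i.1 ((σ i : {x // x ∈ J.1}) : Fin (n+1)))
      = ∑ i ∈ I.1, A i (f i) := by
    rw [← Finset.sum_coe_sort I.1 (fun i => A i (f i))]
    exact Finset.sum_congr rfl fun i _ => by rw [hfI i.1 i.2]
  have hτmaps : ∀ j : {x // x ∈ J.1ᶜ}, τ j.1 ∈ I.1ᶜ := fun j => hτmem j.1 j.2
  let e0 : {x // x ∈ J.1ᶜ} → {x // x ∈ I.1ᶜ} := fun j => ⟨τ j.1, hτmaps j⟩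
  have he0inj : Function.Injective e0 := by
    intro a b hab
    exact Subtype.ext (hτinj a.1 a.2 b.1 b.2 (congrArg Subtype.val hab))
  have hcards : Fintype.card {x // x ∈ J.1ᶜ} = Fintype.card {x // x ∈ I.1ᶜ} := by
    rw [Fintype.card_coe, Fintype.card_coe, Finset.card_compl, Finset.card_compl, I.2, J.2]
  let e : {x // x ∈ J.1ᶜ} ≃ {x // x ∈ I.1ᶜ} :=
    Equiv.ofBijective e0 ((Fintype.bijective_iff_injective_and_card e0).mpr ⟨he0inj, hcards⟩)
  have hRHS : (∑ j ∈ J.1ᶜ,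
        (tropPer (A.submatrix (τ j).succAbove j.succAbove) + ((-p : ℝ) : Rmax)))
      ≤ Finset.univ.sup (fun σ' : {x // x ∈ J.1ᶜ} ≃ {x // x ∈ I.1ᶜ} =>
          ∑ j : {x // x ∈ J.1ᶜ}, tropQInv A j.1 ((σ' j : {x // x ∈ I.1ᶜ}) : Fin (n+1))) := by
    refine le_trans (le_of_eq ?_) (Finset.le_sup (Finset.mem_univ e))
    rw [← Finset.sum_coe_sort (J.1ᶜ)
      (fun j => tropPer (A.submatrix (τ j).succAbove j.succAbove) + ((-p : ℝ) : Rmax))]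
    refine Finset.sum_congr rfl fun j _ => ?_
    show tropPer (A.submatrix (τ j.1).succAbove j.1.succAbove) + ((-p : ℝ) : Rmax)
        = tropQInv A j.1 (τ j.1)
    simp only [tropQInv, tropAdj, Matrix.of_apply, hup]
  rw [← hp]
  refine le_trans ?_ (add_le_add (le_refl ((p : ℝ) : Rmax)) hRHS)
  rw [hσsum]
  have hcJc : (J.1ᶜ).card = n + 1 - k := by
    rw [Finset.card_compl, J.2, Fintype.card_fin]
  have hdistr : ∑ j ∈ J.1ᶜ,
      (tropPer (A.submatrix (τ j).succAbove j.succAbove) + ((-p : ℝ) : Rmax)) =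
      (∑ j ∈ J.1ᶜ, tropPer (A.submatrix (τ j).succAbove j.succAbove)) +
        ((n + 1 - k) • ((-p : ℝ) : Rmax)) := by
    rw [Finset.sum_add_distrib, Finset.sum_const, hcJc]
  rw [hdistr, rmax_coe_nsmul]
  have hreal : p + ((n + 1 - k) • (-p) : ℝ) = -((n - k) • p : ℝ) := by
    have hnk : n + 1 - k = (n - k) + 1 := by omega
    rw [hnk, succ_nsmul, nsmul_eq_mul, nsmul_eq_mul]; push_cast; ring
  calc ∑ i ∈ I.1, A i (f i)
      = (∑ i ∈ I.1, A i (f i) + (((n - k) • p : ℝ) : Rmax)) + ((-((n - k) • p : ℝ) : ℝ) : Rmax) := by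
        rw [add_assoc, ← WithBot.coe_add, add_neg_cancel, WithBot.coe_zero, add_zero]
    _ ≤ (∑ j ∈ J.1ᶜ, tropPer (A.submatrix (τ j).succAbove j.succAbove)) +
          ((-((n - k) • p : ℝ) : ℝ) : Rmax) := add_le_add hsum (le_refl _)
    _ = ((p : ℝ) : Rmax) +
          ((∑ j ∈ J.1ᶜ, tropPer (A.submatrix (τ j).succAbove j.succAbove)) +
            (((n + 1 - k) • (-p) : ℝ) : Rmax)) := by
        rw [add_left_comm, ← WithBot.coe_add, hreal]
end
end

section
/- Over the max-plus semiring, if E is a nonsingular n×n matrix over ℝ_max (per(E) > −∞) and A is any n×n matrix over ℝ_max, then for every k with 1 ≤ k ≤ n, tr((E^∇ ⊙ A ⊙ E)^{∧k}) ≥ tr(A^{∧k}), where tr denotes the tropical trace. -/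
open Matrix

noncomputable section

section Aux

/-- Auxiliary: the permutation of `Fin n` induced by a permutation `π` of `Fin (n+1)`
after deleting `s` from the domain and `π s` from the codomain. -/
private def delPerm {n : ℕ} (π : Equiv.Perm (Fin (n+1))) (s : Fin (n+1)) :
    Equiv.Perm (Fin n) :=
  Equiv.removeNone ((finSuccEquiv' s).symm.trans ((π : Fin (n+1) ≃ Fin (n+1)).trans
    (finSuccEquiv' (π s))))

private theorem delPerm_spec {n : ℕ} (π : Equiv.Perm (Fin (n+1))) (s : Fin (n+1)) (r : Fin n) :
    (π s).succAbove (delPerm π s r) = π (s.succAbove r) := by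
  set g := (finSuccEquiv' s).symm.trans ((π : Fin (n+1) ≃ Fin (n+1)).trans
    (finSuccEquiv' (π s))) with hg
  have hgnone : g none = none := by
    simp [hg, finSuccEquiv'_symm_none, finSuccEquiv'_at]
  have hne : g (some r) ≠ none := fun h =>
    (Option.some_ne_none r) (g.injective (h.trans hgnone.symm))
  obtain ⟨x, hx⟩ := Option.ne_none_iff_exists'.mp hne
  have h1 : some (delPerm π s r) = g (some r) :=
    Equiv.removeNone_some _ ⟨x, hx⟩
  have h2 : g (some r) = finSuccEquiv' (π s) (π (s.succAbove r)) := by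
    simp [hg, finSuccEquiv'_symm_some]
  have := congrArg (finSuccEquiv' (π s)).symm (h1.trans h2)
  simpa [finSuccEquiv'_symm_some] using this

end Aux

/-- for `E` nonsingular and any `A`,
`tr((E^∇ ⊙ A ⊙ E)^{∧k}) ≥ tr(A^{∧k})`. -/
theorem trace_compound_conjugate {n : ℕ} (E A : Matrix (Fin (n+1)) (Fin (n+1)) Rmax)
    (hE : ⊥ < tropPer E)
    (k : ℕ) (hk1 : 1 ≤ k) (hk2 : k ≤ n + 1) :
    tropTrace (compound k A) ≤
      tropTrace (compound k (tropMul (tropMul (tropQInv E) A) E)) := by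
  classical
  set B := tropMul (tropMul (tropQInv E) A) E with hB
  -- a permutation achieving the permanent of E
  obtain ⟨π, -, hπ⟩ := Finset.exists_mem_eq_sup (Finset.univ : Finset (Equiv.Perm (Fin (n+1))))
    Finset.univ_nonempty (fun σ => ∑ i, E i (σ i))
  have hsum : ⊥ < ∑ i, E i (π i) := by rw [tropPer, hπ] at hE; exact hE
  have hne : ∀ r, E r (π r) ≠ ⊥ := by
    intro r hbot
    rw [← Finset.add_sum_erase _ _ (Finset.mem_univ r), hbot, WithBot.bot_add] at hsum
    exact lt_irrefl _ hsum
  choose e he using fun r => WithBot.ne_bot_iff_exists.mp (hne r)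
  set P : ℝ := ∑ r, e r with hP
  have hEsum : (∑ i, E i (π i)) = ((P : ℝ) : Rmax) := by
    rw [hP, WithBot.coe_sum]
    exact Finset.sum_congr rfl fun i _ => (he i).symm
  have hperE : tropPer E = ((P : ℝ) : Rmax) := by rw [tropPer, hπ]; exact hEsum
  have hunbot : WithBot.unbotD 0 (tropPer E) = P := by rw [hperE, WithBot.unbotD_coe]
  -- adjoint bound
  have hadj : ∀ s, ((P - e s : ℝ) : Rmax) ≤ tropAdj E (π s) s := by
    intro s
    have hle : ∑ r : Fin n, (E.submatrix s.succAbove (π s).succAbove) r (delPerm π s r) ≤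
        tropPer (E.submatrix s.succAbove (π s).succAbove) := by
      rw [tropPer]
      exact Finset.le_sup (f := fun ρ : Equiv.Perm (Fin n) =>
        ∑ r, (E.submatrix s.succAbove (π s).succAbove) r (ρ r))
        (Finset.mem_univ (delPerm π s))
    have heq : ∑ r : Fin n, (E.submatrix s.succAbove (π s).succAbove) r (delPerm π s r) =
        ((P - e s : ℝ) : Rmax) := by
      have h1 : ∀ r : Fin n, (E.submatrix s.succAbove (π s).succAbove) r (delPerm π s r) =
          ((e (s.succAbove r) : ℝ) : Rmax) := by
        intro r
        rw [Matrix.submatrix_apply, delPerm_spec]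
        exact (he (s.succAbove r)).symm
      rw [Finset.sum_congr rfl fun r _ => h1 r, ← WithBot.coe_sum]
      congr 1
      have := Fin.sum_univ_succAbove (fun i => e i) s
      rw [hP]
      rw [this]; ring
    rw [tropAdj, Matrix.of_apply, ← heq]
    exact hle
  -- quasi-inverse bound
  have hqinv : ∀ s, ((- e s : ℝ) : Rmax) ≤ tropQInv E (π s) s := by
    intro s
    rw [tropQInv, Matrix.of_apply, hunbot]
    calc ((- e s : ℝ) : Rmax) = ((P - e s : ℝ) : Rmax) + ((- P : ℝ) : Rmax) := by
          rw [← WithBot.coe_add]; congr 1; ring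
      _ ≤ tropAdj E (π s) s + ((- P : ℝ) : Rmax) := add_le_add_left (hadj s) _
  -- entry bound for the conjugate matrix
  have hentry : ∀ s t, A s t + ((e t - e s : ℝ) : Rmax) ≤ B (π s) (π t) := by
    intro s t
    have h1 : tropQInv E (π s) s + A s t ≤ (tropMul (tropQInv E) A) (π s) t :=
      Finset.le_sup (f := fun u => tropQInv E (π s) u + A u t) (Finset.mem_univ s)
    have h2 : (tropMul (tropQInv E) A) (π s) t + E t (π t) ≤ B (π s) (π t) :=
      Finset.le_sup (f := fun u => (tropMul (tropQInv E) A) (π s) u + E u (π t))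
        (Finset.mem_univ t)
    calc A s t + ((e t - e s : ℝ) : Rmax)
        = (((- e s : ℝ) : Rmax) + A s t) + ((e t : ℝ) : Rmax) := by
          have hsplit : ((e t - e s : ℝ) : Rmax) = ((- e s : ℝ) : Rmax) + ((e t : ℝ) : Rmax) := by
            rw [← WithBot.coe_add]; congr 1; ring
          rw [hsplit, ← add_assoc, add_comm (A s t) (((- e s : ℝ) : Rmax))]
      _ ≤ (tropQInv E (π s) s + A s t) + E t (π t) := by
          rw [← he t]
          exact add_le_add_left (add_le_add_left (hqinv s) _) _
      _ ≤ (tropMul (tropQInv E) A) (π s) t + E t (π t) := add_le_add_left h1 _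
      _ ≤ B (π s) (π t) := h2
  -- main argument
  rw [tropTrace]
  apply Finset.sup_le
  intro I _
  rw [compound, Matrix.of_apply]
  apply Finset.sup_le
  intro σ _
  -- the image subset and the conjugated bijection
  set J : KSub (n+1) k := ⟨I.1.image π, by
    rw [Finset.card_image_of_injective _ π.injective, I.2]⟩ with hJ
  have hJle : compound k B J J ≤ tropTrace (compound k B) := by
    rw [tropTrace]
    exact Finset.le_sup (f := fun J' : KSub (n+1) k => compound k B J' J') (Finset.mem_univ J)
  refine le_trans ?_ hJle
  have hmem : ∀ x : Fin (n+1), x ∈ I.1 ↔ π x ∈ J.1 := by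
    intro x
    simp [hJ, Finset.mem_image, π.injective.eq_iff]
  set e' : {x // x ∈ I.1} ≃ {x // x ∈ J.1} := Equiv.subtypeEquiv π hmem with he'
  set τ : {x // x ∈ J.1} ≃ {x // x ∈ J.1} := (e'.symm.trans σ).trans e' with hτ
  have hle2 : ∑ j : {x // x ∈ J.1}, B j.1 (τ j).1 ≤ compound k B J J := by
    rw [compound, Matrix.of_apply]
    exact Finset.le_sup (f := fun τ' : {x // x ∈ J.1} ≃ {x // x ∈ J.1} =>
      ∑ j : {x // x ∈ J.1}, B j.1 (τ' j).1) (Finset.mem_univ τ)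
  refine le_trans ?_ hle2
  have hre : ∑ j : {x // x ∈ J.1}, B j.1 (τ j).1 =
      ∑ x : {x // x ∈ I.1}, B (π x.1) (π (σ x).1) := by
    rw [← Equiv.sum_comp e' (fun j => B j.1 (τ j).1)]
    refine Finset.sum_congr rfl fun x _ => ?_
    have h1 : (e' x).1 = π x.1 := rfl
    have h2 : (τ (e' x)).1 = π (σ x).1 := by
      simp [hτ, he', Equiv.subtypeEquiv]
    rw [h1, h2]
  rw [hre]
  have hzero : (∑ x : {x // x ∈ I.1}, (e (σ x).1 - e x.1)) = 0 := by
    rw [Finset.sum_sub_distrib]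
    rw [← Equiv.sum_comp σ (fun x => e x.1)]
    ring
  calc ∑ i : {x // x ∈ I.1}, A i.1 (σ i).1
      = ∑ i : {x // x ∈ I.1}, A i.1 (σ i).1 +
          ((∑ x : {x // x ∈ I.1}, (e (σ x).1 - e x.1) : ℝ) : Rmax) := by
        rw [hzero]; norm_num
    _ = ∑ i : {x // x ∈ I.1}, (A i.1 (σ i).1 + ((e (σ i).1 - e i.1 : ℝ) : Rmax)) := by
        rw [Finset.sum_add_distrib, WithBot.coe_sum]
    _ ≤ ∑ i : {x // x ∈ I.1}, B (π i.1) (π (σ i).1) :=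
        Finset.sum_le_sum fun i _ => hentry i.1 (σ i).1
end
end

section
/- Over the max-plus semiring, for every n×n matrix A over ℝ_max, every m ≥ 1, and every k with 1 ≤ k ≤ n, one has tr((A^{⊙m})^{∧k}) ≥ m · tr(A^{∧k}), i.e. the tropical trace of the k-th compound of the m-th tropical power of A dominates the m-th tropical power (classical multiple by m) of the trace of the k-th compound of A. -/
open Matrix

noncomputable section

lemma le_tropMul {l p q : Type*} [Fintype p] (A : Matrix l p Rmax) (B : Matrix p q Rmax)
    (i : l) (j : q) (t : p) : A i t + B t j ≤ tropMul A B i j :=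
  Finset.le_sup (f := fun t => A i t + B t j) (Finset.mem_univ t)

lemma path_le {n : ℕ} (A : Matrix (Fin n) (Fin n) Rmax) (π : Fin n → Fin n) (i : Fin n) :
    ∀ m : ℕ, (∑ t : Fin m, A (π^[t.1] i) (π^[t.1+1] i)) ≤ tropPow A m i (π^[m] i) := by
  intro m
  induction m with
  | zero => simp [tropPow, tropId]
  | succ m ih =>
      rw [Fin.sum_univ_castSucc]
      have h1 : (∑ t : Fin m, A (π^[(t.castSucc).1] i) (π^[(t.castSucc).1+1] i))
          = ∑ t : Fin m, A (π^[t.1] i) (π^[t.1+1] i) := by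
        refine Finset.sum_congr rfl fun t _ => by simp [Fin.coe_castSucc]
      rw [h1]
      have h2 := le_tropMul (tropPow A m) A i (π^[m+1] i) (π^[m] i)
      have h3 : A (π^[m] i) (π^[m+1] i) = A (π^[m] i) (π^[m+1] i) := rfl
      calc (∑ t : Fin m, A (π^[t.1] i) (π^[t.1+1] i)) + A (π^[m] i) (π^[m+1] i)
          ≤ tropPow A m i (π^[m] i) + A (π^[m] i) (π^[m+1] i) := add_le_add ih le_rfl
        _ ≤ tropMul (tropPow A m) A i (π^[m+1] i) := by
            have := le_tropMul (tropPow A m) A i (π^[m+1] i) (π^[m] i)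
            simpa [Function.iterate_succ_apply'] using this
        _ = tropPow A (m+1) i (π^[m+1] i) := rfl

/-- `tr((A^{⊙m})^{∧k}) ≥ m ⊙ tr(A^{∧k})`. -/
theorem trace_compound_pow_ge {n : ℕ} (A : Matrix (Fin n) (Fin n) Rmax)
    (m : ℕ) (hm : 1 ≤ m) (k : ℕ) (hk1 : 1 ≤ k) (hk2 : k ≤ n) :
    m • tropTrace (compound k A) ≤ tropTrace (compound k (tropPow A m)) := by
  haveI : Nonempty (KSub n k) := by
    obtain ⟨t, -, ht⟩ := Finset.exists_subset_card_eq (s := (Finset.univ : Finset (Fin n))) (n := k)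
      (by simpa using hk2)
    exact ⟨⟨t, ht⟩⟩
  obtain ⟨I, -, hI⟩ := Finset.exists_mem_eq_sup (Finset.univ : Finset (KSub n k))
    Finset.univ_nonempty (fun I => compound k A I I)
  obtain ⟨σ, -, hσ⟩ := Finset.exists_mem_eq_sup
    (Finset.univ : Finset ({x // x ∈ I.1} ≃ {x // x ∈ I.1}))
    Finset.univ_nonempty (fun σ => ∑ i : {x // x ∈ I.1}, A i.1 (σ i).1)
  have htr : tropTrace (compound k A) = ∑ i : {x // x ∈ I.1}, A i.1 (σ i).1 := by
    rw [tropTrace, hI]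
    exact hσ
  set π : Fin n → Fin n := fun x => if h : x ∈ I.1 then ((σ ⟨x, h⟩ : {x // x ∈ I.1}) : Fin n) else x
    with hπ
  have hiter : ∀ (t : ℕ) (x : {x // x ∈ I.1}), π^[t] x.1 = ((σ^t) x).1 := by
    intro t x
    induction t with
    | zero => simp
    | succ t ih =>
        rw [Function.iterate_succ_apply', ih, hπ]
        simp only [((σ^t) x).2, dif_pos]
        rw [pow_succ']
        simp [Equiv.Perm.mul_apply]
  calc m • tropTrace (compound k A)
      = ∑ _t : Fin m, ∑ i : {x // x ∈ I.1}, A i.1 (σ i).1 := by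
        rw [htr, Finset.sum_const, Finset.card_univ, Fintype.card_fin]
    _ = ∑ t : Fin m, ∑ i : {x // x ∈ I.1}, A ((σ^t.1) i).1 (σ ((σ^t.1) i)).1 := by
        refine Finset.sum_congr rfl fun t _ => ?_
        exact (Equiv.sum_comp (σ^t.1) (fun j => A j.1 (σ j).1)).symm
    _ = ∑ i : {x // x ∈ I.1}, ∑ t : Fin m, A (π^[t.1] i.1) (π^[t.1+1] i.1) := by
        rw [Finset.sum_comm]
        refine Finset.sum_congr rfl fun i _ => Finset.sum_congr rfl fun t _ => ?_
        rw [hiter t.1 i, hiter (t.1+1) i, pow_succ']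
        simp [Equiv.Perm.mul_apply]
    _ ≤ ∑ i : {x // x ∈ I.1}, tropPow A m i.1 (π^[m] i.1) :=
        Finset.sum_le_sum fun i _ => path_le A π i.1 m
    _ = ∑ i : {x // x ∈ I.1}, tropPow A m i.1 (((σ^m) i).1) := by
        refine Finset.sum_congr rfl fun i _ => by rw [hiter m i]
    _ ≤ compound k (tropPow A m) I I :=
        Finset.le_sup (f := fun τ : {x // x ∈ I.1} ≃ {x // x ∈ I.1} =>
          ∑ i : {x // x ∈ I.1}, tropPow A m i.1 (τ i).1) (Finset.mem_univ (σ^m))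
    _ ≤ tropTrace (compound k (tropPow A m)) :=
        Finset.le_sup (f := fun J : KSub n k => compound k (tropPow A m) J J)
          (Finset.mem_univ I)
end
end

section
/- Over the max-plus semiring, if A is a definite n×n matrix over ℝ_max (per(A) = 0 and A_{i,i} = 0 for all i), then every diagonal entry of every compound matrix of A equals the unit: A^{∧k}_{I,I} = 0 for every k with 1 ≤ k ≤ n and every k-element subset I of {1,…,n}. -/
open Matrix

noncomputable section

/-- for a definite matrix `A`, all diagonal entries of each compound
matrix equal the unit: `A^{∧k}_{I,I} = 0`. -/
theorem compound_diag_of_definite {n : ℕ} (A : Matrix (Fin n) (Fin n) Rmax)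
    (hper : tropPer A = 0) (hdiag : ∀ i, A i i = 0)
    (k : ℕ) (hk1 : 1 ≤ k) (hk2 : k ≤ n) (I : KSub n k) :
    compound k A I I = 0 := by
  unfold compound
  simp only [Matrix.of_apply]
  apply le_antisymm
  · apply Finset.sup_le
    intro σ _
    set π : Equiv.Perm (Fin n) :=
      Equiv.Perm.subtypeCongr σ (Equiv.refl {x : Fin n // ¬ x ∈ I.1}) with hπ
    have h1 : ∀ i : {x // x ∈ I.1}, A i.1 (σ i).1 = A i.1 (π i.1) := by
      intro i
      congr 1
      rw [hπ, Equiv.Perm.subtypeCongr.left_apply _ _ i.2]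
    have hle : ∑ i : Fin n, A i (π i) ≤ tropPer A :=
      Finset.le_sup (f := fun σ : Equiv.Perm (Fin n) => ∑ i, A i (σ i))
        (Finset.mem_univ π)
    rw [hper] at hle
    calc (∑ i : {x // x ∈ I.1}, A i.1 (σ i).1)
        = ∑ i : {x // x ∈ I.1}, A i.1 (π i.1) :=
          Finset.sum_congr rfl fun i _ => h1 i
      _ = ∑ i ∈ I.1, A i (π i) := Finset.sum_coe_sort I.1 (fun i => A i (π i))
      _ = (∑ i ∈ I.1, A i (π i)) + ∑ i ∈ I.1ᶜ, A i (π i) := by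
          rw [show (∑ i ∈ I.1ᶜ, A i (π i)) = 0 from ?_, add_zero]
          rw [Finset.sum_congr rfl (fun i hi => ?_), Finset.sum_const_zero]
          rw [hπ, Equiv.Perm.subtypeCongr.right_apply _ _ (Finset.mem_compl.mp hi)]
          exact hdiag i
      _ = ∑ i : Fin n, A i (π i) := Finset.sum_add_sum_compl I.1 _
      _ ≤ 0 := hle
  · refine le_trans ?_ (Finset.le_sup (f := fun σ : {x // x ∈ I.1} ≃ {x // x ∈ I.1} =>
      ∑ i : {x // x ∈ I.1}, A i.1 (σ i).1) (Finset.mem_univ (Equiv.refl _)))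
    have : (∑ i : {x // x ∈ I.1}, A i.1 ((Equiv.refl _) i).1) = 0 := by
      rw [Finset.sum_congr rfl fun i _ => ?_, Finset.sum_const_zero]
      exact hdiag i.1
    rw [this]
end
end

section
/- Over the max-plus semiring, if A is a nonsingular n×n matrix over ℝ_max (per(A) > −∞), then the matrices 𝓘_A = A ⊙ A^∇ and 𝓘'_A = A^∇ ⊙ A satisfy: all of their diagonal entries equal 0, they dominate the tropical identity matrix entrywise (𝓘_A ≥ I and 𝓘'_A ≥ I), and per(𝓘_A) = per(𝓘'_A) = 0. -/
open Matrix

noncomputable section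

/-! ### Auxiliary lemmas -/

lemma Rmax.add_sup {ι : Type*} [Fintype ι] [Nonempty ι] (c : Rmax) (f : ι → Rmax) :
    (Finset.univ.sup fun x => c + f x) = c + Finset.univ.sup f := by
  obtain ⟨i, -, h⟩ := Finset.univ.exists_mem_eq_sup Finset.univ_nonempty f
  refine le_antisymm (Finset.sup_le fun x _ =>
    add_le_add_right (Finset.le_sup (Finset.mem_univ x)) c) ?_
  rw [h]; exact Finset.le_sup (f := fun x => c + f x) (Finset.mem_univ i)

lemma tropPer_transpose {m : Type*} [Fintype m] [DecidableEq m] (A : Matrix m m Rmax) :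
    tropPer Aᵀ = tropPer A := by
  have key : ∀ B : Matrix m m Rmax, tropPer Bᵀ ≤ tropPer B := by
    intro B
    apply Finset.sup_le; intro σ _
    have h : ∑ k, Bᵀ k (σ k) = ∑ k, B k (σ⁻¹ k) := by
      rw [← Equiv.sum_comp σ (fun k => B k (σ⁻¹ k))]
      simp [Matrix.transpose_apply]
    rw [h]
    exact Finset.le_sup (f := fun σ' : Equiv.Perm m => ∑ k, B k (σ' k)) (Finset.mem_univ σ⁻¹)
  exact le_antisymm (key A) (by simpa using key Aᵀ)

lemma tropPer_expand_row {n : ℕ} (A : Matrix (Fin (n+1)) (Fin (n+1)) Rmax) (i : Fin (n+1)) :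
    tropPer A = Finset.univ.sup fun t => A i t + tropPer (A.submatrix i.succAbove t.succAbove) := by
  apply le_antisymm
  · apply Finset.sup_le; intro σ _
    set e : Option (Fin n) ≃ Option (Fin n) :=
      ((finSuccEquiv' i).symm.trans σ).trans (finSuccEquiv' (σ i)) with he
    set ρ : Fin n ≃ Fin n := Equiv.removeNone e with hρ
    have key : ∀ k, (σ i).succAbove (ρ k) = σ (i.succAbove k) := by
      intro k
      have hne : σ (i.succAbove k) ≠ σ i := fun h =>
        Fin.succAbove_ne i k (σ.injective h)
      obtain ⟨j, hj⟩ := Fin.exists_succAbove_eq hne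
      have hes : e (some k) = some j := by
        simp only [he, Equiv.trans_apply, finSuccEquiv'_symm_some, ← hj,
          finSuccEquiv'_succAbove]
      have := Equiv.removeNone_some e ⟨j, hes⟩
      rw [hes] at this
      rw [hρ, Option.some_inj.mp this, hj]
    have hsum : ∑ k, A k (σ k)
        = A i (σ i) + ∑ k : Fin n, A (i.succAbove k) ((σ i).succAbove (ρ k)) := by
      rw [Fin.sum_univ_succAbove (fun k => A k (σ k)) i]
      congr 1
      exact Finset.sum_congr rfl fun k _ => by rw [key k]
    rw [hsum]
    have h1 : ∑ k : Fin n, A (i.succAbove k) ((σ i).succAbove (ρ k))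
        ≤ tropPer (A.submatrix i.succAbove (σ i).succAbove) :=
      Finset.le_sup (f := fun ρ' : Equiv.Perm (Fin n) =>
        ∑ k, A.submatrix i.succAbove (σ i).succAbove k (ρ' k)) (Finset.mem_univ ρ)
    exact le_trans (add_le_add_right h1 _)
      (Finset.le_sup (f := fun t => A i t + tropPer (A.submatrix i.succAbove t.succAbove))
        (Finset.mem_univ (σ i)))
  · apply Finset.sup_le; intro t _
    have hrw : A i t + tropPer (A.submatrix i.succAbove t.succAbove)
        = Finset.univ.sup fun ρ : Equiv.Perm (Fin n) =>
            A i t + ∑ k, A.submatrix i.succAbove t.succAbove k (ρ k) :=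
      (Rmax.add_sup _ _).symm
    rw [hrw]
    apply Finset.sup_le; intro ρ _
    set σ : Equiv.Perm (Fin (n+1)) :=
      (finSuccEquiv' i).trans ((Equiv.optionCongr ρ).trans (finSuccEquiv' t).symm) with hσ
    have hσi : σ i = t := by
      simp [hσ, finSuccEquiv'_at, finSuccEquiv'_symm_none]
    have hσs : ∀ k, σ (i.succAbove k) = t.succAbove (ρ k) := by
      intro k
      simp [hσ, finSuccEquiv'_succAbove, finSuccEquiv'_symm_some]
    have hsum : A i t + ∑ k, A.submatrix i.succAbove t.succAbove k (ρ k)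
        = ∑ k, A k (σ k) := by
      rw [Fin.sum_univ_succAbove (fun k => A k (σ k)) i, hσi]
      congr 1
      exact Finset.sum_congr rfl fun k _ => by rw [hσs k]; rfl
    rw [hsum]
    exact Finset.le_sup (f := fun σ' : Equiv.Perm (Fin (n+1)) => ∑ k, A k (σ' k))
      (Finset.mem_univ σ)

lemma sum_nsmul_le {N : ℕ} (A : Matrix (Fin N) (Fin N) Rmax) :
    ∀ (r : ℕ) (F : Fin N → Fin N → ℕ),
      (∀ a, ∑ b, F a b = r) → (∀ b, ∑ a, F a b = r) →
      ∑ a, ∑ b, F a b • A a b ≤ r • tropPer A := by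
  intro r
  induction r with
  | zero =>
    intro F hrow _
    have hz : ∀ a b, F a b = 0 := fun a b =>
      Finset.sum_eq_zero_iff.mp (hrow a) b (Finset.mem_univ b)
    simp [hz]
  | succ r ih =>
    intro F hrow hcol
    have hall : ∀ s : Finset (Fin N),
        s.card ≤ (s.biUnion fun a => Finset.univ.filter fun b => F a b ≠ 0).card := by
      intro s
      set T := s.biUnion fun a => Finset.univ.filter fun b => F a b ≠ 0 with hT
      have h1 : ∀ a ∈ s, ∑ b, F a b = ∑ b ∈ T, F a b := by
        intro a ha
        refine (Finset.sum_subset (Finset.subset_univ T) ?_).symm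
        intro b _ hb
        by_contra hne
        exact hb (Finset.mem_biUnion.mpr ⟨a, ha, Finset.mem_filter.mpr ⟨Finset.mem_univ b, hne⟩⟩)
      have h2 : (r+1) * s.card ≤ (r+1) * T.card := by
        calc (r+1) * s.card = ∑ _a ∈ s, (r+1) := by rw [Finset.sum_const, smul_eq_mul, mul_comm]
          _ = ∑ a ∈ s, ∑ b ∈ T, F a b := by
              refine Finset.sum_congr rfl fun a ha => ?_
              rw [← h1 a ha, hrow a]
          _ = ∑ b ∈ T, ∑ a ∈ s, F a b := Finset.sum_comm
          _ ≤ ∑ _b ∈ T, (r+1) := by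
              refine Finset.sum_le_sum fun b _ => ?_
              rw [← hcol b]
              exact Finset.sum_le_sum_of_subset (Finset.subset_univ s)
          _ = (r+1) * T.card := by rw [Finset.sum_const, smul_eq_mul, mul_comm]
      exact Nat.le_of_mul_le_mul_left h2 (Nat.succ_pos r)
    obtain ⟨f, hfinj, hf⟩ := (Finset.all_card_le_biUnion_card_iff_exists_injective
      (fun a => Finset.univ.filter fun b => F a b ≠ 0)).mp hall
    let σ : Equiv.Perm (Fin N) := Equiv.ofBijective f ((Finite.injective_iff_bijective).mp hfinj)
    have hσ : ∀ a, F a (σ a) ≠ 0 := by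
      intro a
      have := hf a
      exact (Finset.mem_filter.mp this).2
    set F' : Fin N → Fin N → ℕ := fun a b => if b = σ a then F a b - 1 else F a b with hF'
    have hrow' : ∀ a, ∑ b, F' a b = r := by
      intro a
      have e1 : F a (σ a) + ∑ b ∈ Finset.univ.erase (σ a), F a b = r + 1 := by
        rw [Finset.add_sum_erase _ _ (Finset.mem_univ (σ a))]; exact hrow a
      have e2 : ∑ b, F' a b = F' a (σ a) + ∑ b ∈ Finset.univ.erase (σ a), F' a b :=
        (Finset.add_sum_erase _ _ (Finset.mem_univ (σ a))).symm
      have e3 : ∑ b ∈ Finset.univ.erase (σ a), F' a b = ∑ b ∈ Finset.univ.erase (σ a), F a b :=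
        Finset.sum_congr rfl fun b hb => by
          simp [hF', Finset.ne_of_mem_erase hb]
      have h1 : 1 ≤ F a (σ a) := Nat.one_le_iff_ne_zero.mpr (hσ a)
      rw [e2, e3]
      simp only [hF', if_pos rfl]
      omega
    have hcol' : ∀ b, ∑ a, F' a b = r := by
      intro b
      have e1 : F (σ.symm b) b + ∑ a ∈ Finset.univ.erase (σ.symm b), F a b = r + 1 :=
        (Finset.add_sum_erase Finset.univ (fun a => F a b)
          (Finset.mem_univ (σ.symm b))).trans (hcol b)
      have e2 : ∑ a, F' a b = F' (σ.symm b) b + ∑ a ∈ Finset.univ.erase (σ.symm b), F' a b :=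
        (Finset.add_sum_erase _ _ (Finset.mem_univ (σ.symm b))).symm
      have e3 : ∑ a ∈ Finset.univ.erase (σ.symm b), F' a b
          = ∑ a ∈ Finset.univ.erase (σ.symm b), F a b := by
        refine Finset.sum_congr rfl fun a ha => ?_
        have hne : a ≠ σ.symm b := Finset.ne_of_mem_erase ha
        have : b ≠ σ a := fun h => hne (by rw [h, Equiv.symm_apply_apply])
        simp [hF', this]
      have hb : b = σ (σ.symm b) := (Equiv.apply_symm_apply σ b).symm
      have h1 : 1 ≤ F (σ.symm b) b := by
        have h := hσ (σ.symm b)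
        rw [Equiv.apply_symm_apply] at h
        exact Nat.one_le_iff_ne_zero.mpr h
      rw [e2, e3]
      have hF'v : F' (σ.symm b) b = F (σ.symm b) b - 1 := by
        simp [hF', ← hb]
      omega
    have key : ∀ a b, F a b • A a b = F' a b • A a b + (if b = σ a then A a b else (0:Rmax)) := by
      intro a b
      by_cases h : b = σ a
      · subst h
        rw [if_pos rfl]
        simp only [hF', if_pos rfl]
        rw [← succ_nsmul]
        congr 1
        have := hσ a
        omega
      · simp [hF', h]
    calc ∑ a, ∑ b, F a b • A a b
        = ∑ a, ∑ b, (F' a b • A a b + (if b = σ a then A a b else 0)) :=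
          Finset.sum_congr rfl fun a _ => Finset.sum_congr rfl fun b _ => key a b
      _ = (∑ a, ∑ b, F' a b • A a b) + ∑ a, ∑ b, (if b = σ a then A a b else 0) := by
          rw [← Finset.sum_add_distrib]
          exact Finset.sum_congr rfl fun a _ => Finset.sum_add_distrib
      _ ≤ r • tropPer A + tropPer A := by
          refine add_le_add (ih F' hrow' hcol') ?_
          have h0 : ∀ a, ∑ b, (if b = σ a then A a b else (0:Rmax)) = A a (σ a) := by
            intro a
            rw [Finset.sum_ite_eq' Finset.univ (σ a) (fun b => A a b)]
            simp
          rw [Finset.sum_congr rfl fun a _ => h0 a]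
          exact Finset.le_sup (f := fun σ' : Equiv.Perm (Fin N) => ∑ k, A k (σ' k))
            (Finset.mem_univ σ)
      _ = (r+1) • tropPer A := (succ_nsmul _ _).symm

lemma succAbove_count {n : ℕ} (j a : Fin (n+1)) :
    (∑ k : Fin n, if j.succAbove k = a then 1 else 0) = if a = j then 0 else 1 := by
  by_cases h : a = j
  · subst h
    rw [if_pos rfl]
    refine Finset.sum_eq_zero fun k _ => ?_
    rw [if_neg (Fin.succAbove_ne a k)]
  · rw [if_neg h]
    obtain ⟨k₀, hk₀⟩ := Fin.exists_succAbove_eq h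
    have hiff : ∀ k : Fin n, (j.succAbove k = a) ↔ (k = k₀) := by
      intro k
      constructor
      · intro hk
        exact Fin.succAbove_right_injective (hk.trans hk₀.symm)
      · rintro rfl; exact hk₀
    calc (∑ k : Fin n, if j.succAbove k = a then 1 else 0)
        = ∑ k : Fin n, if k = k₀ then 1 else 0 :=
          Finset.sum_congr rfl fun k _ => by rw [if_congr (hiff k) rfl rfl]
      _ = 1 := by rw [Finset.sum_ite_eq' Finset.univ k₀ (fun _ => 1)]; simp

lemma erase_count {N : ℕ} (c : Fin (N+1)) :
    (∑ i : Fin (N+1), if i = c then 0 else 1) = N := by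
  have h1 : (∑ i : Fin (N+1), if i = c then (1:ℕ) else 0) = 1 := by
    rw [Finset.sum_ite_eq' Finset.univ c (fun _ => 1)]; simp
  have h2 : (∑ i : Fin (N+1), ((if i = c then (0:ℕ) else 1) + if i = c then 1 else 0)) = N+1 := by
    have h3 : ∀ i : Fin (N+1), ((if i = c then (0:ℕ) else 1) + if i = c then 1 else 0) = 1 := by
      intro i; by_cases h : i = c <;> simp [h]
    simp [h3]
  rw [Finset.sum_add_distrib, h1] at h2
  omega

lemma sum_comp_nsmul {T ι M : Type*} [Fintype T] [Fintype ι] [DecidableEq ι] [AddCommMonoid M]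
    (g : T → ι) (f : ι → M) :
    ∑ x : T, f (g x) = ∑ i : ι, (∑ x : T, if g x = i then 1 else 0) • f i := by
  rw [← Finset.sum_fiberwise' Finset.univ g f]
  refine Finset.sum_congr rfl fun i _ => ?_
  rw [Finset.sum_const, Finset.card_filter]

/-- The crucial upper bound: `per(A ⊙ A^∇) ≤ 0` for `A` with real (finite) permanent. -/
lemma tropPer_mul_qinv_le {n : ℕ} (A : Matrix (Fin (n+1)) (Fin (n+1)) Rmax)
    (p : ℝ) (hp : tropPer A = (p : Rmax)) :
    tropPer (tropMul A (tropQInv A)) ≤ 0 := by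
  apply Finset.sup_le
  intro σ _
  have hchoice : ∀ i : Fin (n+1), ∃ t : Fin (n+1),
      tropMul A (tropQInv A) i (σ i) = A i t + tropQInv A t (σ i) := by
    intro i
    obtain ⟨t, -, h⟩ := Finset.univ.exists_mem_eq_sup Finset.univ_nonempty
      (fun t => A i t + tropQInv A t (σ i))
    exact ⟨t, h⟩
  choose t ht using hchoice
  have hchoice2 : ∀ i : Fin (n+1), ∃ ρ : Equiv.Perm (Fin n),
      tropAdj A (t i) (σ i)
        = ∑ k, A ((σ i).succAbove k) ((t i).succAbove (ρ k)) := by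
    intro i
    obtain ⟨ρ, -, h⟩ := Finset.univ.exists_mem_eq_sup Finset.univ_nonempty
      (fun ρ : Equiv.Perm (Fin n) =>
        ∑ k, (A.submatrix (σ i).succAbove (t i).succAbove) k (ρ k))
    exact ⟨ρ, h⟩
  choose ρ hρ using hchoice2
  -- the collection of all used entries
  set g : Fin (n+1) × Option (Fin n) → Fin (n+1) × Fin (n+1) := fun x =>
    match x with
    | (i, none) => (i, t i)
    | (i, some k) => ((σ i).succAbove k, (t i).succAbove (ρ i k)) with hg
  set F : Fin (n+1) → Fin (n+1) → ℕ :=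
    fun a b => ∑ x : Fin (n+1) × Option (Fin n), if g x = (a, b) then 1 else 0 with hF
  -- splitting sums of indicators over a product target
  have hsplit1 : ∀ (q : Fin (n+1) × Fin (n+1)) (a : Fin (n+1)),
      (∑ b, if q = (a, b) then 1 else 0) = if q.1 = a then 1 else 0 := by
    rintro ⟨c, d⟩ a
    by_cases h : c = a
    · subst h
      rw [if_pos rfl]
      have hiff : ∀ b, ((c, d) = (c, b)) ↔ (b = d) := by
        intro b; constructor
        · intro hb; exact ((Prod.ext_iff.mp hb).2).symm
        · rintro rfl; rfl
      calc (∑ b, if (c, d) = (c, b) then 1 else 0)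
          = ∑ b, if b = d then 1 else 0 :=
            Finset.sum_congr rfl fun b _ => by rw [if_congr (hiff b) rfl rfl]
        _ = 1 := by rw [Finset.sum_ite_eq' Finset.univ d (fun _ => 1)]; simp
    · rw [if_neg h]
      refine Finset.sum_eq_zero fun b _ => ?_
      rw [if_neg]
      intro hb
      exact h (Prod.ext_iff.mp hb).1
  have hsplit2 : ∀ (q : Fin (n+1) × Fin (n+1)) (b : Fin (n+1)),
      (∑ a, if q = (a, b) then 1 else 0) = if q.2 = b then 1 else 0 := by
    rintro ⟨c, d⟩ b
    by_cases h : d = b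
    · subst h
      rw [if_pos rfl]
      have hiff : ∀ a, ((c, d) = (a, d)) ↔ (a = c) := by
        intro a; constructor
        · intro hb; exact ((Prod.ext_iff.mp hb).1).symm
        · rintro rfl; rfl
      calc (∑ a, if (c, d) = (a, d) then 1 else 0)
          = ∑ a, if a = c then 1 else 0 :=
            Finset.sum_congr rfl fun a _ => by rw [if_congr (hiff a) rfl rfl]
        _ = 1 := by rw [Finset.sum_ite_eq' Finset.univ c (fun _ => 1)]; simp
    · rw [if_neg h]
      refine Finset.sum_eq_zero fun a _ => ?_
      rw [if_neg]
      intro hb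
      exact h (Prod.ext_iff.mp hb).2
  -- row sums
  have hrow : ∀ a, ∑ b, F a b = n + 1 := by
    intro a
    have h1 : ∑ b, F a b = ∑ x : Fin (n+1) × Option (Fin n), if (g x).1 = a then 1 else 0 := by
      simp only [hF]
      rw [Finset.sum_comm (f := fun b x => if g x = (a, b) then 1 else 0)]
      exact Finset.sum_congr rfl fun x _ => hsplit1 (g x) a
    rw [h1, Fintype.sum_prod_type]
    have h2 : ∀ i : Fin (n+1), (∑ o : Option (Fin n), if (g (i, o)).1 = a then 1 else 0)
        = (if i = a then 1 else 0) + (if a = σ i then 0 else 1) := by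
      intro i
      rw [Fintype.sum_option]
      congr 1
      exact succAbove_count (σ i) a
    rw [Finset.sum_congr rfl fun i _ => h2 i, Finset.sum_add_distrib]
    have h3 : (∑ i : Fin (n+1), if i = a then 1 else 0) = 1 := by
      rw [Finset.sum_ite_eq' Finset.univ a (fun _ => 1)]; simp
    have h4 : (∑ i : Fin (n+1), if a = σ i then 0 else 1) = n := by
      have hiff : ∀ i, (a = σ i) ↔ (i = σ⁻¹ a) := by
        intro i; constructor
        · rintro rfl; simp
        · rintro rfl; simp
      calc (∑ i : Fin (n+1), if a = σ i then 0 else 1)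
          = ∑ i : Fin (n+1), if i = σ⁻¹ a then 0 else 1 :=
            Finset.sum_congr rfl fun i _ => by rw [if_congr (hiff i) rfl rfl]
        _ = n := erase_count _
    rw [h3, h4, Nat.add_comm]
  -- column sums
  have hcol : ∀ b, ∑ a, F a b = n + 1 := by
    intro b
    have h1 : ∑ a, F a b = ∑ x : Fin (n+1) × Option (Fin n), if (g x).2 = b then 1 else 0 := by
      simp only [hF]
      rw [Finset.sum_comm (f := fun a x => if g x = (a, b) then 1 else 0)]
      exact Finset.sum_congr rfl fun x _ => hsplit2 (g x) b
    rw [h1, Fintype.sum_prod_type]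
    have h2 : ∀ i : Fin (n+1), (∑ o : Option (Fin n), if (g (i, o)).2 = b then 1 else 0) = 1 := by
      intro i
      rw [Fintype.sum_option]
      have h5 : (∑ k : Fin n, if (g (i, some k)).2 = b then 1 else 0)
          = if b = t i then 0 else 1 := by
        have h6 : (∑ k : Fin n, if (t i).succAbove ((ρ i) k) = b then 1 else 0)
            = ∑ k : Fin n, if (t i).succAbove k = b then 1 else 0 :=
          Equiv.sum_comp (ρ i) (fun k => if (t i).succAbove k = b then 1 else 0)
        calc (∑ k : Fin n, if (g (i, some k)).2 = b then 1 else 0)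
            = ∑ k : Fin n, if (t i).succAbove ((ρ i) k) = b then 1 else 0 := rfl
          _ = ∑ k : Fin n, if (t i).succAbove k = b then 1 else 0 := h6
          _ = if b = t i then 0 else 1 := succAbove_count (t i) b
      rw [h5]
      show (if t i = b then 1 else 0) + (if b = t i then 0 else 1) = 1
      by_cases h : b = t i
      · subst h; simp
      · rw [if_neg (Ne.symm h), if_neg h]
    rw [Finset.sum_congr rfl fun i _ => h2 i]
    simp
  -- value identity
  have hval : ∑ i, (A i (t i) + tropAdj A (t i) (σ i))
      = ∑ a, ∑ b, F a b • A a b := by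
    have h1 : ∑ x : Fin (n+1) × Option (Fin n), A (g x).1 (g x).2
        = ∑ i, (A i (t i) + tropAdj A (t i) (σ i)) := by
      rw [Fintype.sum_prod_type]
      refine Finset.sum_congr rfl fun i _ => ?_
      rw [Fintype.sum_option]
      congr 1
      exact (hρ i).symm
    have h2 := sum_comp_nsmul g (fun q : Fin (n+1) × Fin (n+1) => A q.1 q.2)
    rw [h1] at h2
    rw [h2, Fintype.sum_prod_type]
  -- put it together
  have hbound : ∑ i, (A i (t i) + tropAdj A (t i) (σ i)) ≤ (n+1) • tropPer A := by
    rw [hval]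
    exact sum_nsmul_le A (n+1) F hrow hcol
  have hunbot : WithBot.unbotD 0 (tropPer A) = p := by rw [hp]; rfl
  have htotal : ∑ i, tropMul A (tropQInv A) i (σ i)
      = (∑ i, (A i (t i) + tropAdj A (t i) (σ i))) + ∑ _i : Fin (n+1), ((-p : ℝ) : Rmax) := by
    rw [← Finset.sum_add_distrib]
    refine Finset.sum_congr rfl fun i _ => ?_
    rw [ht i]
    show A i (t i) + (tropAdj A (t i) (σ i) + ((-WithBot.unbotD 0 (tropPer A) : ℝ) : Rmax)) = _
    rw [hunbot, add_assoc]
  rw [htotal]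
  have hconst : (∑ _i : Fin (n+1), ((-p : ℝ) : Rmax)) = (n+1) • ((-p : ℝ) : Rmax) := by
    rw [Finset.sum_const, Finset.card_univ, Fintype.card_fin]
  calc (∑ i, (A i (t i) + tropAdj A (t i) (σ i))) + ∑ _i : Fin (n+1), ((-p : ℝ) : Rmax)
      ≤ (n+1) • tropPer A + (n+1) • ((-p:ℝ) : Rmax) := by
        rw [hconst]; exact add_le_add_left hbound _
    _ = (n+1) • ((p : Rmax) + ((-p:ℝ) : Rmax)) := by rw [hp, ← nsmul_add]
    _ = 0 := by
        have hz : (p : Rmax) + ((-p:ℝ) : Rmax) = 0 := by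
          rw [← WithBot.coe_add]
          norm_num
        rw [hz, smul_zero]

/-- Diagonal entries of `A ⊙ A^∇` are zero. -/
lemma diag_mul_qinv {n : ℕ} (A : Matrix (Fin (n+1)) (Fin (n+1)) Rmax)
    (p : ℝ) (hp : tropPer A = (p : Rmax)) (i : Fin (n+1)) :
    tropMul A (tropQInv A) i i = 0 := by
  have hunbot : WithBot.unbotD 0 (tropPer A) = p := by rw [hp]; rfl
  have h1 : tropMul A (tropQInv A) i i
      = Finset.univ.sup fun t =>
          ((-p : ℝ) : Rmax) + (A i t + tropPer (A.submatrix i.succAbove t.succAbove)) := by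
    show (Finset.univ.sup fun t => A i t + tropQInv A t i) = _
    refine Finset.sup_congr rfl fun t _ => ?_
    show A i t + (tropAdj A t i + ((-WithBot.unbotD 0 (tropPer A) : ℝ) : Rmax)) = _
    rw [hunbot]
    show A i t + (tropPer (A.submatrix i.succAbove t.succAbove) + ((-p : ℝ) : Rmax)) = _
    rw [← add_assoc, add_comm _ (((-p : ℝ) : Rmax))]
  rw [h1, Rmax.add_sup, ← tropPer_expand_row A i, hp, ← WithBot.coe_add]
  norm_num

lemma tropMul_transpose {l m p' : Type*} [Fintype m]
    (A : Matrix l m Rmax) (B : Matrix m p' Rmax) :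
    (tropMul A B)ᵀ = tropMul Bᵀ Aᵀ := by
  ext i j
  show (Finset.univ.sup fun t => A j t + B t i) = Finset.univ.sup fun t => Bᵀ i t + Aᵀ t j
  exact Finset.sup_congr rfl fun t _ => add_comm _ _

lemma tropQInv_transpose {n : ℕ} (A : Matrix (Fin (n+1)) (Fin (n+1)) Rmax) :
    tropQInv Aᵀ = (tropQInv A)ᵀ := by
  ext i j
  show tropPer (Aᵀ.submatrix j.succAbove i.succAbove) + ((-WithBot.unbotD 0 (tropPer Aᵀ) : ℝ) : Rmax)
      = tropPer (A.submatrix i.succAbove j.succAbove) + ((-WithBot.unbotD 0 (tropPer A) : ℝ) : Rmax)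
  rw [← Matrix.transpose_submatrix, tropPer_transpose, tropPer_transpose]

/-- `A^∇ ⊙ A` is the transpose of `Aᵀ ⊙ (Aᵀ)^∇`. -/
lemma qinv_mul_eq_transpose {n : ℕ} (A : Matrix (Fin (n+1)) (Fin (n+1)) Rmax) :
    tropMul (tropQInv A) A = (tropMul Aᵀ (tropQInv Aᵀ))ᵀ := by
  rw [tropQInv_transpose, tropMul_transpose, transpose_transpose, transpose_transpose]

lemma zero_le_tropPer_of_diag {N : ℕ} (M : Matrix (Fin N) (Fin N) Rmax)
    (h : ∀ i, M i i = 0) : (0 : Rmax) ≤ tropPer M := by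
  have h1 : ∑ i, M i ((1 : Equiv.Perm (Fin N)) i) = 0 := by
    simp [h]
  calc (0 : Rmax) = ∑ i, M i ((1 : Equiv.Perm (Fin N)) i) := h1.symm
    _ ≤ tropPer M := Finset.le_sup (f := fun σ : Equiv.Perm (Fin N) => ∑ k, M k (σ k))
        (Finset.mem_univ 1)

/-- for `A` nonsingular, `𝓘_A = A ⊙ A^∇` and `𝓘'_A = A^∇ ⊙ A` have
zero diagonal, dominate the tropical identity, and have tropical permanent `0`. -/
theorem quasi_identity_props {n : ℕ} (A : Matrix (Fin (n+1)) (Fin (n+1)) Rmax)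
    (hA : ⊥ < tropPer A) :
    (∀ i, tropMul A (tropQInv A) i i = 0) ∧
    (∀ i, tropMul (tropQInv A) A i i = 0) ∧
    (∀ i j, tropId (Fin (n+1)) i j ≤ tropMul A (tropQInv A) i j) ∧
    (∀ i j, tropId (Fin (n+1)) i j ≤ tropMul (tropQInv A) A i j) ∧
    tropPer (tropMul A (tropQInv A)) = 0 ∧
    tropPer (tropMul (tropQInv A) A) = 0 := by
  obtain ⟨p, hp⟩ := WithBot.ne_bot_iff_exists.mp (ne_of_gt hA)
  have hp' : tropPer A = (p : Rmax) := hp.symm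
  have hpT : tropPer Aᵀ = (p : Rmax) := (tropPer_transpose A).trans hp'
  have d1 : ∀ i, tropMul A (tropQInv A) i i = 0 := fun i => diag_mul_qinv A p hp' i
  have d2 : ∀ i, tropMul (tropQInv A) A i i = 0 := by
    intro i
    rw [qinv_mul_eq_transpose]
    exact diag_mul_qinv Aᵀ p hpT i
  have dom : ∀ (M : Matrix (Fin (n+1)) (Fin (n+1)) Rmax), (∀ i, M i i = 0) →
      ∀ i j, tropId (Fin (n+1)) i j ≤ M i j := by
    intro M hM i j
    by_cases h : i = j
    · subst h
      rw [hM i]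
      show (if i = i then (0:Rmax) else ⊥) ≤ 0
      rw [if_pos rfl]
    · show (if i = j then (0:Rmax) else ⊥) ≤ M i j
      rw [if_neg h]
      exact bot_le
  have per1 : tropPer (tropMul A (tropQInv A)) = 0 :=
    le_antisymm (tropPer_mul_qinv_le A p hp') (zero_le_tropPer_of_diag _ d1)
  have per2 : tropPer (tropMul (tropQInv A) A) = 0 := by
    rw [qinv_mul_eq_transpose, tropPer_transpose]
    exact le_antisymm (tropPer_mul_qinv_le Aᵀ p hpT)
      (zero_le_tropPer_of_diag _ fun i => diag_mul_qinv Aᵀ p hpT i)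
  exact ⟨d1, d2, dom _ d1, dom _ d2, per1, per2⟩
end
end

section
/- Sign factorization for restrictions of a permutation: let π be a permutation of {1,…,n} and let I be a subset of {1,…,n} with complement I^c. Define the sign of a bijection σ between two finite totally ordered subsets of integers as (−1)^{N(σ)}, where N(σ) is the number of inversions, i.e. of pairs (i,j) in the source with i < j and σ(i) > σ(j). Then sgn(π) = sgn(π|_I) · sgn(π|_{I^c}) · (−1)^{∑_{i∈I} (i + π(i))}, where π|_I : I → π[I] and π|_{I^c} : I^c → π[I^c] are the restrictions of π. -/
open Matrix

noncomputable section

open Finset Equiv in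
section
section helpers
variable {n : ℕ}

private lemma card_filter_zmod {α : Type*} (s : Finset α) (P : α → Prop) [DecidablePred P] :
    (((s.filter P).card : ℕ) : ZMod 2) = ∑ x ∈ s, (if P x then 1 else 0 : ZMod 2) := by
  rw [Finset.sum_boole]

private lemma sign_eq_signAux (π : Equiv.Perm (Fin n)) :
    Equiv.Perm.sign π = Equiv.Perm.signAux π := by
  refine Equiv.Perm.swap_induction_on π ?_ ?_
  · simp [Equiv.Perm.signAux_one]
  · intro f x y hxy ih
    rw [Equiv.Perm.sign_mul, Equiv.Perm.signAux_mul, ih, Equiv.Perm.sign_swap hxy,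
      Equiv.Perm.signAux_swap hxy]

private lemma sign_eq_pow (π : Equiv.Perm (Fin n)) :
    ((Equiv.Perm.sign π : ℤˣ) : ℤ) =
      (-1 : ℤ) ^ ((Finset.univ ×ˢ Finset.univ).filter
        fun p : Fin n × Fin n => p.1 < p.2 ∧ π p.2 < π p.1).card := by
  rw [sign_eq_signAux]
  have h1 : ((Equiv.Perm.signAux π : ℤˣ) : ℤ)
      = ∏ x ∈ Equiv.Perm.finPairsLT n, (if π x.1 ≤ π x.2 then (-1 : ℤ) else 1) := by
    unfold Equiv.Perm.signAux
    push_cast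
    exact Finset.prod_congr rfl fun x _ => by split_ifs <;> simp
  rw [h1, Finset.prod_ite, Finset.prod_const, Finset.prod_const_one, mul_one]
  congr 1
  apply Finset.card_bij (fun (x : Σ _ : Fin n, Fin n) _ => (x.2, x.1))
  · intro a ha
    simp only [Finset.mem_filter, Equiv.Perm.mem_finPairsLT] at ha
    simp only [Finset.mem_filter, Finset.mem_product, Finset.mem_univ, true_and]
    exact ⟨ha.1, ha.2.lt_of_ne fun h => (ne_of_gt ha.1) (π.injective h)⟩
  · rintro ⟨a1, a2⟩ _ ⟨b1, b2⟩ _ h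
    simp only [Prod.mk.injEq] at h
    simp [h.1, h.2]
  · rintro ⟨b1, b2⟩ hb
    simp only [Finset.mem_filter, Finset.mem_product, Finset.mem_univ, true_and] at hb
    exact ⟨⟨b2, b1⟩, by simp [Equiv.Perm.mem_finPairsLT, hb.1, hb.2.le], rfl⟩

end helpers

section parity
variable {n : ℕ}

private def gh (π : Equiv.Perm (Fin n)) (i j : Fin n) : ZMod 2 :=
  (if i < j then 1 else 0) + (if π i < π j then 1 else 0)

private lemma sum_sym_zero (π : Equiv.Perm (Fin n)) (s : Finset (Fin n)) :
    ∑ p ∈ s ×ˢ s, gh π p.1 p.2 = 0 := by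
  apply Finset.sum_involution (fun p _ => (p.2, p.1))
  · intro p hp
    rcases eq_or_ne p.1 p.2 with h | h
    · simp [gh, h]
    · have hπ : π p.1 ≠ π p.2 := fun e => h (π.injective e)
      rcases h.lt_or_gt with h1 | h1 <;> rcases hπ.lt_or_gt with h2 | h2 <;>
        simp [gh, h1, h2, h1.not_gt, h2.not_gt] <;> decide
  · intro p hp hf heq
    exact hf (by simp [gh, show p.2 = p.1 from congrArg Prod.fst heq])
  · intro p hp
    simp only [Finset.mem_product] at hp ⊢
    exact ⟨hp.2, hp.1⟩
  · intro p hp; rfl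

private lemma cross_pt (π : Equiv.Perm (Fin n)) {i j : Fin n} (hne : i ≠ j) :
    ((if i < j ∧ π j < π i then 1 else 0) + (if j < i ∧ π i < π j then 1 else 0) : ZMod 2)
      = gh π i j := by
  have hπ : π i ≠ π j := fun e => hne (π.injective e)
  rcases hne.lt_or_gt with h1 | h1 <;> rcases hπ.lt_or_gt with h2 | h2 <;>
    simp [gh, h1, h2, h1.not_gt, h2.not_gt] <;> decide

private lemma cast_sub_one (a : Fin n) :
    ((n - 1 - (a : ℕ) : ℕ) : ZMod 2) = ((n - 1 : ℕ) : ZMod 2) + ((a : ℕ) : ZMod 2) := by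
  have h : (n - 1 - (a : ℕ)) + (a : ℕ) = n - 1 :=
    Nat.sub_add_cancel (Nat.le_sub_one_of_lt a.isLt)
  have h2 := congrArg (Nat.cast : ℕ → ZMod 2) h
  push_cast at h2
  rw [eq_sub_of_add_eq h2, CharTwo.sub_eq_add]

private lemma sum_univ_lt (a : Fin n) :
    ∑ j : Fin n, ((if a < j then 1 else 0) : ZMod 2) = ((n - 1 - (a : ℕ) : ℕ) : ZMod 2) := by
  rw [Finset.sum_boole]
  congr 1
  rw [show Finset.filter (fun j => a < j) Finset.univ = Finset.Ioi a by
    ext x; simp, Fin.card_Ioi]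

private lemma sum_univ_gh (π : Equiv.Perm (Fin n)) (i : Fin n) :
    ∑ j : Fin n, gh π i j
      = ((n - 1 - (i : ℕ) : ℕ) : ZMod 2) + ((n - 1 - (π i : ℕ) : ℕ) : ZMod 2) := by
  unfold gh
  rw [Finset.sum_add_distrib, sum_univ_lt]
  congr 1
  rw [← sum_univ_lt (π i)]
  exact Equiv.sum_comp π (fun y => (if π i < y then 1 else 0 : ZMod 2))

end parity

section main
variable {n : ℕ}

private def chi (π : Equiv.Perm (Fin n)) (i j : Fin n) : ZMod 2 :=
  if i < j ∧ π j < π i then 1 else 0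

private lemma card_eq_double_sum (π : Equiv.Perm (Fin n)) (s t : Finset (Fin n)) :
    ((((s ×ˢ t).filter fun p : Fin n × Fin n => p.1 < p.2 ∧ π p.2 < π p.1).card : ℕ) : ZMod 2)
      = ∑ i ∈ s, ∑ j ∈ t, chi π i j := by
  rw [card_filter_zmod, Finset.sum_product]
  rfl

private lemma key_parity (π : Equiv.Perm (Fin n)) (I : Finset (Fin n)) :
    ((((Finset.univ ×ˢ Finset.univ).filter
        fun p : Fin n × Fin n => p.1 < p.2 ∧ π p.2 < π p.1).card : ℕ) : ZMod 2)
      = ((((I ×ˢ I).filter fun p : Fin n × Fin n => p.1 < p.2 ∧ π p.2 < π p.1).card : ℕ) : ZMod 2)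
        + ((((Iᶜ ×ˢ Iᶜ).filter fun p : Fin n × Fin n => p.1 < p.2 ∧ π p.2 < π p.1).card : ℕ) : ZMod 2)
        + ((∑ i ∈ I, ((i : ℕ) + (π i : ℕ)) : ℕ) : ZMod 2) := by
  rw [card_eq_double_sum, card_eq_double_sum, card_eq_double_sum]
  have split1 : ∀ F : Fin n → ZMod 2, ∑ i, F i = ∑ i ∈ I, F i + ∑ i ∈ Iᶜ, F i :=
    fun F => (Finset.sum_add_sum_compl I F).symm
  rw [split1]
  rw [show (∑ i ∈ I, ∑ j : Fin n, chi π i j)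
      = ∑ i ∈ I, (∑ j ∈ I, chi π i j + ∑ j ∈ Iᶜ, chi π i j) from
    Finset.sum_congr rfl fun i _ => split1 _]
  rw [show (∑ i ∈ Iᶜ, ∑ j : Fin n, chi π i j)
      = ∑ i ∈ Iᶜ, (∑ j ∈ I, chi π i j + ∑ j ∈ Iᶜ, chi π i j) from
    Finset.sum_congr rfl fun i _ => split1 _]
  rw [Finset.sum_add_distrib, Finset.sum_add_distrib]
  have hcross : (∑ i ∈ I, ∑ j ∈ Iᶜ, chi π i j) + ∑ i ∈ Iᶜ, ∑ j ∈ I, chi π i j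
      = ((∑ i ∈ I, ((i : ℕ) + (π i : ℕ)) : ℕ) : ZMod 2) := by
    rw [Finset.sum_comm (s := Iᶜ) (t := I) (f := fun i j => chi π i j), ← Finset.sum_add_distrib]
    have step1 : ∀ i ∈ I, (∑ j ∈ Iᶜ, chi π i j + ∑ j ∈ Iᶜ, chi π j i)
        = ∑ j : Fin n, gh π i j - ∑ j ∈ I, gh π i j := by
      intro i hi
      rw [← Finset.sum_add_distrib]
      have : ∑ j ∈ Iᶜ, (chi π i j + chi π j i) = ∑ j ∈ Iᶜ, gh π i j := by
        refine Finset.sum_congr rfl fun j hj => ?_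
        have hne : i ≠ j := fun h => (Finset.mem_compl.mp hj) (h ▸ hi)
        exact cross_pt π hne
      rw [this]
      exact eq_sub_of_add_eq' (Finset.sum_add_sum_compl I (gh π i))
    rw [Finset.sum_congr rfl step1, Finset.sum_sub_distrib]
    have hzero : ∑ i ∈ I, ∑ j ∈ I, gh π i j = 0 := by
      rw [← Finset.sum_product' (f := fun i j => gh π i j)]
      exact sum_sym_zero π I
    rw [hzero, sub_zero]
    rw [Finset.sum_congr rfl fun i (_ : i ∈ I) => sum_univ_gh π i]
    push_cast
    refine Finset.sum_congr rfl fun i _ => ?_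
    rw [cast_sub_one, cast_sub_one]
    have : ∀ c x y : ZMod 2, (c + x) + (c + y) = x + y := by
      intro c x y
      rw [show (c + x) + (c + y) = (c + c) + (x + y) by ring, CharTwo.add_self_eq_zero, zero_add]
    push_cast
    exact this _ _ _
  rw [← hcross]
  ring

end main
end

open Finset Equiv

/-- sign factorization for restrictions of a permutation:
`sgn(π) = sgn(π|_I) · sgn(π|_{Iᶜ}) · (−1)^{∑_{i∈I}(i + π(i))}`, where the sign of
a bijection between finite ordered sets of integers is `(−1)` to the number of
inversions (pairs `i < j` in the source with `π i > π j`). -/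
theorem sign_restriction_factorization {n : ℕ} (π : Equiv.Perm (Fin n))
    (I : Finset (Fin n)) :
    ((Equiv.Perm.sign π : ℤˣ) : ℤ) =
      (-1 : ℤ) ^ ((I ×ˢ I).filter fun p => p.1 < p.2 ∧ π p.2 < π p.1).card *
      (-1 : ℤ) ^ ((Iᶜ ×ˢ Iᶜ).filter fun p => p.1 < p.2 ∧ π p.2 < π p.1).card *
      (-1 : ℤ) ^ (∑ i ∈ I, ((i : ℕ) + (π i : ℕ))) := by
  rw [sign_eq_pow π, ← pow_add, ← pow_add]
  have key : ((((Finset.univ ×ˢ Finset.univ).filter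
        fun p : Fin n × Fin n => p.1 < p.2 ∧ π p.2 < π p.1).card : ℕ) : ZMod 2)
      = ((((I ×ˢ I).filter fun p : Fin n × Fin n => p.1 < p.2 ∧ π p.2 < π p.1).card
        + ((Iᶜ ×ˢ Iᶜ).filter fun p : Fin n × Fin n => p.1 < p.2 ∧ π p.2 < π p.1).card
        + ∑ i ∈ I, ((i : ℕ) + (π i : ℕ)) : ℕ) : ZMod 2) := by
    rw [key_parity π I]; push_cast; ring
  rw [ZMod.natCast_eq_natCast_iff'] at key
  rw [neg_one_pow_eq_pow_mod_two, key, ← neg_one_pow_eq_pow_mod_two]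
end
end
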